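/- arXiv:1707.06792 — 2 statements merged into one kernel-verified Lean document; each statement's English description precedes it below -/
import Mathlib

section
/- A finite undirected graph is decomposable (i.e., it is complete or admits a decomposition (A,B) with A∪B=V, A∩B complete and separating A from B, such that the induced subgraphs on A and B are decomposable) if and only if it is chordal, i.e., every cycle of length at least 4 has a chord. -/
open SimpleGraph

variable {V : Type*}

/-- A set of vertices is complete in `G` if all pairs of distinct vertices in it are adjacent. -/
def IsCompleteOn (G : SimpleGraph V) (A : Set V) : Prop :=
  ∀ a ∈ A, ∀ b ∈ A, a ≠ b → G.Adj a b

/-- `A ∩ B` separates `A` from `B`: every path (in the induced subgraph on `A ∪ B`)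
between a vertex of `A \ B` and a vertex of `B \ A` intersects `A ∩ B`. -/
def Separates (G : SimpleGraph V) (A B : Set V) : Prop :=
  ∀ a ∈ A \ B, ∀ b ∈ B \ A, ∀ w : G.Walk a b,
    (∀ v ∈ w.support, v ∈ A ∪ B) → ∃ v ∈ w.support, v ∈ A ∩ B

/-- Recursive notion of decomposability of the induced subgraph of `G` on a vertex set:
it is complete, or it admits a decomposition `(A, B)` (i.e. `A ∩ B` is complete and
separates `A` from `B`) into decomposable induced subgraphs. -/
inductive DecomposableOn (G : SimpleGraph V) : Set V → Prop
  | complete (A : Set V) : IsCompleteOn G A → DecomposableOn G A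
  | decomp (A B : Set V) : IsCompleteOn G (A ∩ B) → Separates G A B →
      DecomposableOn G A → DecomposableOn G B → DecomposableOn G (A ∪ B)

/-- A graph is decomposable if its full vertex set is. -/
def Decomposable (G : SimpleGraph V) : Prop := DecomposableOn G Set.univ

/-- A cycle has a chord: an edge of `G` joining two vertices of the cycle which is not
an edge of the cycle (i.e. joining two non-consecutive vertices of the cycle). -/
def HasChord (G : SimpleGraph V) {v : V} (c : G.Walk v v) : Prop :=
  ∃ a ∈ c.support, ∃ b ∈ c.support, G.Adj a b ∧ s(a, b) ∉ c.edges

/-- A graph is chordal if every cycle of length at least `4` has a chord. -/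
def Chordal (G : SimpleGraph V) : Prop :=
  ∀ (v : V) (c : G.Walk v v), c.IsCycle → 4 ≤ c.length → HasChord G c

variable {G : SimpleGraph V}

namespace ChordalAux

open SimpleGraph.Walk

lemma adj_of_length_one {u v : V} {P : G.Walk u v} (h : P.length = 1) : G.Adj u v := by
  cases P with
  | nil => simp at h
  | cons h' P' =>
    have : P'.length = 0 := by simpa using h
    exact (Walk.eq_of_length_eq_zero this) ▸ h'

/-- Shortcut lemma: an adjacency between two support vertices which is not an
edge of the walk yields a strictly shorter walk with the same endpoints. -/
lemma shortcut [DecidableEq V] : ∀ {u v : V} (P : G.Walk u v) {x y : V}, x ∈ P.support → y ∈ P.support →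
    G.Adj x y → s(x, y) ∉ P.edges →
    ∃ Q : G.Walk u v, Q.length < P.length ∧ ∀ z ∈ Q.support, z ∈ P.support := by
  intro u v P
  induction P with
  | nil =>
    intro x y hx hy hadj _
    simp only [support_nil, List.mem_singleton] at hx hy
    subst hx; subst hy
    exact absurd hadj (G.irrefl)
  | @cons u w v h P' ih =>
    intro x y hx hy hadj he
    have key : ∀ {x y : V}, x = u → y ∈ P'.support → G.Adj x y →
        s(x, y) ∉ (Walk.cons h P').edges →
        ∃ Q : G.Walk u v, Q.length < (Walk.cons h P').length ∧
          ∀ z ∈ Q.support, z ∈ (Walk.cons h P').support := by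
      intro x' y' hx' hy' hadj' he'
      subst hx'
      have hyw : y' ≠ w := by
        rintro rfl
        exact he' (by simp [edges_cons])
      refine ⟨Walk.cons hadj' (P'.dropUntil y' hy'), ?_, ?_⟩
      · have hspec := congrArg Walk.length (P'.take_spec hy')
        rw [length_append] at hspec
        have htu : (P'.takeUntil y' hy').length ≠ 0 := fun h0 =>
          hyw (Walk.eq_of_length_eq_zero h0).symm
        simp only [length_cons]
        omega
      · intro z hz
        simp only [support_cons, List.mem_cons] at hz ⊢
        rcases hz with rfl | hz
        · exact Or.inl rfl
        · exact Or.inr (P'.support_dropUntil_subset hy' hz)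
    simp only [support_cons, List.mem_cons] at hx hy
    rcases hx with rfl | hx
    · rcases hy with rfl | hy
      · exact absurd hadj (G.irrefl)
      · exact key rfl hy hadj he
    · rcases hy with rfl | hy
      · rw [Sym2.eq_swap] at he
        exact key rfl hx hadj.symm he
      · have he' : s(x, y) ∉ P'.edges := fun hmem => he (by simp [edges_cons, hmem])
        obtain ⟨Q', hQlt, hQsup⟩ := ih hx hy hadj he'
        refine ⟨Walk.cons h Q', by simp only [length_cons]; omega, ?_⟩
        intro z hz
        simp only [support_cons, List.mem_cons] at hz ⊢
        rcases hz with rfl | hz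
        · exact Or.inl rfl
        · exact Or.inr (hQsup z hz)

/-- Existence of a minimal-length, hence chord-free, path between two vertices among
walks whose support stays in `W`. -/
lemma exists_good_walk {u v : V} {W : Set V}
    (hex : ∃ P : G.Walk u v, ∀ z ∈ P.support, z ∈ W) :
    ∃ P : G.Walk u v, P.IsPath ∧ (∀ z ∈ P.support, z ∈ W) ∧
      ∀ x y, x ∈ P.support → y ∈ P.support → G.Adj x y → s(x, y) ∈ P.edges := by
  classical
  have hex' : ∃ n, ∃ P : G.Walk u v, P.length = n ∧ ∀ z ∈ P.support, z ∈ W := by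
    obtain ⟨P, hP⟩ := hex
    exact ⟨P.length, P, rfl, hP⟩
  obtain ⟨P₀, hP₀len, hP₀W⟩ := Nat.find_spec hex'
  refine ⟨P₀.bypass, P₀.bypass_isPath, fun z hz => hP₀W z (P₀.support_bypass_subset hz), ?_⟩
  intro x y hx hy hadj
  by_contra hne
  obtain ⟨Q, hQlt, hQsup⟩ := shortcut P₀.bypass hx hy hadj hne
  have hQW : ∀ z ∈ Q.support, z ∈ W := fun z hz =>
    hP₀W z (P₀.support_bypass_subset (hQsup z hz))
  have hlt : Q.length < Nat.find hex' := by
    calc Q.length < P₀.bypass.length := hQlt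
    _ ≤ P₀.length := P₀.length_bypass_le
    _ = Nat.find hex' := hP₀len
  exact Nat.find_min hex' hlt ⟨Q, rfl, hQW⟩

lemma mem_support_iff_mem_tail {v z : V} {c : G.Walk v v} (h : ¬ c.Nil) :
    z ∈ c.support ↔ z ∈ c.support.tail := by
  constructor
  · intro hz
    rw [c.support_eq_cons, List.mem_cons] at hz
    rcases hz with rfl | hz
    · cases c with
      | nil => exact absurd Walk.nil_nil h
      | cons h' p =>
        simp [Walk.support_cons, p.end_mem_support]
    · exact hz
  · exact fun hz => List.mem_of_mem_tail hz

lemma chord_of_decomposableOn {S : Set V} (hd : DecomposableOn G S) :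
    ∀ (v : V) (c : G.Walk v v), c.IsCycle → 4 ≤ c.length →
      (∀ z ∈ c.support, z ∈ S) → HasChord G c := by
  classical
  induction hd with
  | complete A hA =>
    intro v c hc hlen hsub
    by_contra hch
    simp only [HasChord, not_exists, not_and, not_not] at hch
    
    set t := c.support.toFinset with ht
    have htail : c.support.tail.toFinset ⊆ t := by
      intro z hz
      rw [List.mem_toFinset] at hz ⊢
      exact List.mem_of_mem_tail hz
    have hcard : c.length ≤ t.card := by
      have h1 : c.support.tail.toFinset.card = c.length := by
        rw [List.toFinset_card_of_nodup hc.support_nodup, List.length_tail,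
          Walk.length_support]
        omega
      calc c.length = c.support.tail.toFinset.card := h1.symm
        _ ≤ t.card := Finset.card_le_card htail
    have hedge : c.edges.toFinset.card ≤ c.length := by
      have := c.edges.toFinset_card_le
      rwa [Walk.length_edges] at this
    have himg : t.offDiag.image (fun p => s(p.1, p.2)) ⊆ c.edges.toFinset := by
      intro e he
      obtain ⟨⟨x, y⟩, hp, rfl⟩ := Finset.mem_image.mp he
      rw [Finset.mem_offDiag] at hp
      obtain ⟨hx, hy, hxy⟩ := hp
      rw [ht, List.mem_toFinset] at hx hy
      rw [List.mem_toFinset]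
      exact hch x hx y hy (hA x (hsub x hx) y (hsub y hy) hxy)
    have hfib : ∀ e ∈ t.offDiag.image (fun p => s(p.1, p.2)),
        (t.offDiag.filter (fun p => s(p.1, p.2) = e)).card ≤ 2 := by
      intro e he
      obtain ⟨⟨x, y⟩, -, rfl⟩ := Finset.mem_image.mp he
      have hsub' : t.offDiag.filter (fun p => s(p.1, p.2) = s(x, y)) ⊆
          {(x, y), (y, x)} := by
        intro p hp
        rw [Finset.mem_filter] at hp
        rcases Sym2.eq_iff.mp hp.2 with ⟨h1, h2⟩ | ⟨h1, h2⟩ <;>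
          simp [Finset.mem_insert, Finset.mem_singleton, Prod.ext_iff, h1, h2]
      calc _ ≤ ({(x, y), (y, x)} : Finset (V × V)).card := Finset.card_le_card hsub'
        _ ≤ 2 := by
          apply le_trans (Finset.card_insert_le _ _)
          simp
    have hmain := Finset.card_le_mul_card_image t.offDiag 2 hfib
    rw [Finset.offDiag_card] at hmain
    have h2 : (t.offDiag.image (fun p => s(p.1, p.2))).card ≤ c.length :=
      le_trans (Finset.card_le_card himg) hedge
    have h4 : 4 ≤ t.card := le_trans hlen hcard
    have h5 : 4 * t.card ≤ t.card * t.card := Nat.mul_le_mul_right _ h4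
    obtain ⟨k, hk⟩ : ∃ k, t.card * t.card = k := ⟨_, rfl⟩
    rw [hk] at hmain h5
    omega
  | decomp A B hAB hsep hA hB ihA ihB =>
    intro v c hc hlen hsub
    by_cases h1 : ∀ z ∈ c.support, z ∈ A
    · exact ihA v c hc hlen h1
    by_cases h2 : ∀ z ∈ c.support, z ∈ B
    · exact ihB v c hc hlen h2
    push_neg at h1 h2
    obtain ⟨y, hyc, hyA⟩ := h1
    obtain ⟨x, hxc, hxB⟩ := h2
    have hxA : x ∈ A := by
      rcases hsub x hxc with h | h
      · exact h
      · exact absurd h hxB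
    have hyB : y ∈ B := by
      rcases hsub y hyc with h | h
      · exact absurd h hyA
      · exact h
    set d := c.rotate x hxc with hd_def
    have hdc : d.IsCycle := hc.rotate hxc
    have hmem : ∀ z, z ∈ d.support ↔ z ∈ c.support := by
      intro z
      rw [mem_support_iff_mem_tail hdc.not_nil, mem_support_iff_mem_tail hc.not_nil]
      exact (Walk.support_rotate c x hxc).mem_iff
    have hedges : ∀ e, e ∈ d.edges ↔ e ∈ c.edges := fun e =>
      (Walk.rotate_edges c x hxc).mem_iff
    have hyd : y ∈ d.support := (hmem y).mpr hyc
    set p := d.takeUntil y hyd with hp_def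
    set q := d.dropUntil y hyd with hq_def
    have hspec : p.append q = d := d.take_spec hyd
    have hsupd : d.support = p.support ++ q.support.tail := by
      rw [← hspec, Walk.support_append]
    have htail2 : d.support.tail = p.support.tail ++ q.support.tail := by
      have h2' : d.support = x :: (p.support.tail ++ q.support.tail) := by
        rw [hsupd, p.support_eq_cons, List.cons_append]; simp
      have h1' : d.support = x :: d.support.tail := d.support_eq_cons
      rw [h1'] at h2'
      injection h2'
    have hnodup := hdc.support_nodup
    rw [htail2] at hnodup
    have hdisj : p.support.tail.Disjoint q.support.tail :=
      List.disjoint_of_nodup_append hnodup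
    have hpsub : ∀ z ∈ p.support, z ∈ A ∪ B := fun z hz =>
      hsub z ((hmem z).mp (d.support_takeUntil_subset hyd hz))
    have hqsub' : ∀ z ∈ q.reverse.support, z ∈ A ∪ B := by
      intro z hz
      rw [Walk.support_reverse, List.mem_reverse] at hz
      exact hsub z ((hmem z).mp (d.support_dropUntil_subset hyd hz))
    obtain ⟨u, hup, huAB⟩ := hsep x ⟨hxA, hxB⟩ y ⟨hyB, hyA⟩ p hpsub
    obtain ⟨w', hwq', hwAB⟩ := hsep x ⟨hxA, hxB⟩ y ⟨hyB, hyA⟩ q.reverse hqsub'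
    have hwq : w' ∈ q.support := by
      rwa [Walk.support_reverse, List.mem_reverse] at hwq'
    have hupt : u ∈ p.support.tail := by
      rw [p.support_eq_cons, List.mem_cons] at hup
      rcases hup with rfl | hup
      · exact absurd huAB.2 hxB
      · exact hup
    have hwqt : w' ∈ q.support.tail := by
      rw [q.support_eq_cons, List.mem_cons] at hwq
      rcases hwq with rfl | hwq
      · exact absurd hwAB.1 hyA
      · exact hwq
    have huw : u ≠ w' := fun h => hdisj hupt (h ▸ hwqt)
    have hadj : G.Adj u w' := hAB u huAB w' hwAB huw
    have hnotd : s(u, w') ∉ d.edges := by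
      rw [← hspec, Walk.edges_append, List.mem_append]
      rintro (h | h)
      · have hw'p : w' ∈ p.support := p.snd_mem_support_of_mem_edges h
        have : w' ∈ p.support.tail := by
          rw [p.support_eq_cons, List.mem_cons] at hw'p
          rcases hw'p with rfl | hw'p
          · exact absurd hwAB.2 hxB
          · exact hw'p
        exact hdisj this hwqt
      · have huq : u ∈ q.support := q.fst_mem_support_of_mem_edges h
        have : u ∈ q.support.tail := by
          rw [q.support_eq_cons, List.mem_cons] at huq
          rcases huq with rfl | huq
          · exact absurd huAB.1 hyA
          · exact huq
        exact hdisj hupt this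
    refine ⟨u, ?_, w', ?_, hadj, ?_⟩
    · exact (hmem u).mp (d.support_takeUntil_subset hyd hup)
    · exact (hmem w').mp (d.support_dropUntil_subset hyd hwq)
    · intro hmemE
      exact hnotd ((hedges _).mpr hmemE)

lemma takeUntil_reach [DecidableEq V] {a b u : V} {S T : Set V}
    (w : G.Walk a b) (hw : ∀ z ∈ w.support, z ∈ S \ (T \ {u})) (hu : u ∈ w.support) :
    ∃ p : G.Walk a u, ∀ z ∈ p.support, z ≠ u →
      ∃ q : G.Walk a z, ∀ y ∈ q.support, y ∈ S \ T := by
  refine ⟨w.takeUntil u hu, ?_⟩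
  intro z hz hzu
  refine ⟨(w.takeUntil u hu).takeUntil z hz, ?_⟩
  intro y hy
  have hcount := w.count_support_takeUntil_eq_one hu
  have hnotu : u ∉ ((w.takeUntil u hu).takeUntil z hz).support := by
    intro hmem
    have hspec := (w.takeUntil u hu).take_spec hz
    have hsupp : (w.takeUntil u hu).support
        = ((w.takeUntil u hu).takeUntil z hz).support
          ++ ((w.takeUntil u hu).dropUntil z hz).support.tail := by
      have hcongr := congrArg Walk.support hspec
      rw [Walk.support_append] at hcongr
      exact hcongr.symm
    have hu2 : u ∈ ((w.takeUntil u hu).dropUntil z hz).support.tail := by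
      have hend : u ∈ ((w.takeUntil u hu).dropUntil z hz).support :=
        Walk.end_mem_support _
      rw [Walk.support_eq_cons, List.mem_cons] at hend
      rcases hend with h | h
      · exact absurd h.symm hzu
      · exact h
    have hc2 : 2 ≤ (w.takeUntil u hu).support.count u := by
      rw [hsupp, List.count_append]
      have c1 : 1 ≤ ((w.takeUntil u hu).takeUntil z hz).support.count u :=
        List.count_pos_iff.mpr hmem
      have c2 : 1 ≤ ((w.takeUntil u hu).dropUntil z hz).support.tail.count u :=
        List.count_pos_iff.mpr hu2
      omega
    omega
  have hyu : y ≠ u := fun h => hnotu (h ▸ hy)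
  have hyS : y ∈ S \ (T \ {u}) :=
    hw y (w.support_takeUntil_subset hu ((w.takeUntil u hu).support_takeUntil_subset hz hy))
  exact ⟨hyS.1, fun hyT => hyS.2 ⟨hyT, by simpa using hyu⟩⟩

lemma decomposableOn_of_chordal [Fintype V] (hG : Chordal G) :
    ∀ (n : ℕ) (S : Set V), S.ncard ≤ n → DecomposableOn G S := by
  classical
  intro n
  induction n with
  | zero =>
    intro S hS
    rw [Nat.le_zero] at hS
    have hSe : S = ∅ := (Set.ncard_eq_zero S.toFinite).mp hS
    exact DecomposableOn.complete S (by intro a ha; rw [hSe] at ha; exact absurd ha (Set.notMem_empty a))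
  | succ n ih =>
    intro S hS
    by_cases hcomp : IsCompleteOn G S
    · exact DecomposableOn.complete S hcomp
    simp only [IsCompleteOn] at hcomp
    push_neg at hcomp
    obtain ⟨a, haS, b, hbS, hab, hnadj⟩ := hcomp
    set SepP : Set V → Prop := fun T => T ⊆ S \ {a, b} ∧
      ∀ w : G.Walk a b, ¬ ∀ z ∈ w.support, z ∈ S \ T with hSepP
    have hSep0 : SepP (S \ {a, b}) := by
      refine ⟨subset_rfl, ?_⟩
      intro w hw
      cases w with
      | nil => exact hab rfl
      | @cons _ c _ hadj w' =>
        have hcmem : c ∈ (Walk.cons hadj w').support := by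
          simp [Walk.support_cons, w'.start_mem_support]
        have hcz := hw c hcmem
        have hc2 : c = a ∨ c = b := by
          rcases hcz with ⟨hcS, hcn⟩
          by_contra hcc
          push_neg at hcc
          exact hcn ⟨hcS, by simp [hcc.1, hcc.2]⟩
        rcases hc2 with rfl | rfl
        · exact G.irrefl hadj
        · exact hnadj hadj
    obtain ⟨T, hT, hTm⟩ :=
      Set.Finite.exists_minimalFor id {T | SepP T} (Set.toFinite _) ⟨_, hSep0⟩
    have hTmin : ∀ T', SepP T' → id T' ≤ id T → id T = id T' :=
      fun T' hT' hle => le_antisymm (hTm hT' hle) hle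
    simp only [Set.mem_setOf_eq] at hT
    set Ca : Set V := {x | ∃ q : G.Walk a x, ∀ y ∈ q.support, y ∈ S \ T} with hCa
    set Cb : Set V := {x | ∃ q : G.Walk b x, ∀ y ∈ q.support, y ∈ S \ T} with hCb
    have haT : a ∉ T := fun h => by have := hT.1 h; simp at this
    have hbT : b ∉ T := fun h => by have := hT.1 h; simp at this
    have haCa : a ∈ Ca := ⟨Walk.nil, by intro y hy; rw [Walk.support_nil, List.mem_singleton] at hy; subst hy; exact ⟨haS, haT⟩⟩
    have hbCb : b ∈ Cb := ⟨Walk.nil, by intro y hy; rw [Walk.support_nil, List.mem_singleton] at hy; subst hy; exact ⟨hbS, hbT⟩⟩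
    have hCaS : Ca ⊆ S \ T := by
      rintro x ⟨q, hq⟩
      exact hq x q.end_mem_support
    have hCbS : Cb ⊆ S \ T := by
      rintro x ⟨q, hq⟩
      exact hq x q.end_mem_support
    have hbCa : b ∉ Ca := by
      rintro ⟨q, hq⟩
      exact hT.2 q hq
    have hdisjC : ∀ x, x ∈ Ca → x ∈ Cb → False := by
      rintro x ⟨wa, hwa⟩ ⟨wb, hwb⟩
      apply hT.2 (wa.append wb.reverse)
      intro z hz
      rw [Walk.mem_support_append_iff] at hz
      rcases hz with hz | hz
      · exact hwa z hz
      · rw [Walk.support_reverse, List.mem_reverse] at hz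
        exact hwb z hz
    -- walks from a (resp. b) to each vertex of T through the respective component
    have hkey : ∀ u ∈ T, (∃ p : G.Walk a u, ∀ z ∈ p.support, z ≠ u → z ∈ Ca) ∧
        (∃ p : G.Walk b u, ∀ z ∈ p.support, z ≠ u → z ∈ Cb) := by
      intro u hu
      have hnotSep : ¬ SepP (T \ {u}) := by
        intro hSep'
        have heq := hTmin _ hSep' Set.diff_subset
        simp only [id_eq] at heq
        have : u ∈ T \ {u} := by first | (rw [heq]; exact hu) | (rw [← heq]; exact hu)
        simp at this
      have hw1 : ∃ w : G.Walk a b, ∀ z ∈ w.support, z ∈ S \ (T \ {u}) := by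
        by_contra hno
        push_neg at hno
        refine hnotSep ⟨Set.diff_subset.trans hT.1, fun w hwsup => ?_⟩
        obtain ⟨z, hz, hz2⟩ := hno w
        exact hz2 (hwsup z hz)
      obtain ⟨w, hw⟩ := hw1
      have hu_mem : u ∈ w.support := by
        by_contra hum
        apply hT.2 w
        intro z hz
        have hz' := hw z hz
        refine ⟨hz'.1, fun hzT => hz'.2 ⟨hzT, fun hzu => ?_⟩⟩
        rw [Set.mem_singleton_iff] at hzu
        subst hzu
        exact hum hz
      constructor
      · exact takeUntil_reach w hw hu_mem
      · have hw' : ∀ z ∈ w.reverse.support, z ∈ S \ (T \ {u}) := by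
          intro z hz
          rw [Walk.support_reverse, List.mem_reverse] at hz
          exact hw z hz
        have hu_mem' : u ∈ w.reverse.support := by
          rw [Walk.support_reverse, List.mem_reverse]; exact hu_mem
        exact takeUntil_reach w.reverse hw' hu_mem'
    -- T is complete
    have hTcomp : IsCompleteOn G T := by
      intro u hu v' hv' huv
      by_contra hnadj'
      obtain ⟨⟨pau, hpau⟩, ⟨pbu, hpbu⟩⟩ := hkey u hu
      obtain ⟨⟨pav, hpav⟩, ⟨pbv, hpbv⟩⟩ := hkey v' hv'
      have hexP : ∃ P : G.Walk u v', ∀ z ∈ P.support, z ∈ Ca ∪ {u, v'} := by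
        refine ⟨pau.reverse.append pav, ?_⟩
        intro z hz
        rw [Walk.mem_support_append_iff] at hz
        by_cases hzu : z = u
        · right; simp [hzu]
        by_cases hzv : z = v'
        · right; simp [hzv]
        rcases hz with hz | hz
        · rw [Walk.support_reverse, List.mem_reverse] at hz
          exact Or.inl (hpau z hz hzu)
        · exact Or.inl (hpav z hz hzv)
      have hexQ : ∃ Q : G.Walk v' u, ∀ z ∈ Q.support, z ∈ Cb ∪ {u, v'} := by
        refine ⟨pbv.reverse.append pbu, ?_⟩
        intro z hz
        rw [Walk.mem_support_append_iff] at hz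
        by_cases hzu : z = u
        · right; simp [hzu]
        by_cases hzv : z = v'
        · right; simp [hzv]
        rcases hz with hz | hz
        · rw [Walk.support_reverse, List.mem_reverse] at hz
          exact Or.inl (hpbv z hz hzv)
        · exact Or.inl (hpbu z hz hzu)
      obtain ⟨P, hPpath, hPW, hPfree⟩ := exists_good_walk hexP
      obtain ⟨Q, hQpath, hQW, hQfree⟩ := exists_good_walk hexQ
      have hPlen : 2 ≤ P.length := by
        have h0 : P.length ≠ 0 := fun h0 => huv (Walk.eq_of_length_eq_zero h0)
        have h1 : P.length ≠ 1 := fun h1 => hnadj' (adj_of_length_one h1)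
        omega
      have hQlen : 2 ≤ Q.length := by
        have h0 : Q.length ≠ 0 := fun h0 => huv (Walk.eq_of_length_eq_zero h0).symm
        have h1 : Q.length ≠ 1 := fun h1 => hnadj' (adj_of_length_one h1).symm
        omega
      have hmemuv : ∀ z : V, z ∈ ({u, v'} : Set V) ↔ z = u ∨ z = v' := by
        intro z; simp
      have hPtne : ∀ z ∈ P.support.tail, z ≠ u := by
        intro z hz h
        have hnd := hPpath.support_nodup
        rw [P.support_eq_cons, List.nodup_cons] at hnd
        exact hnd.1 (h ▸ hz)
      have hQtne : ∀ z ∈ Q.support.tail, z ≠ v' := by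
        intro z hz h
        have hnd := hQpath.support_nodup
        rw [Q.support_eq_cons, List.nodup_cons] at hnd
        exact hnd.1 (h ▸ hz)
      have hPQsupp : ∀ z, z ∈ P.support → z ∈ Q.support → z = u ∨ z = v' := by
        intro z hzP hzQ
        by_contra hzc
        push_neg at hzc
        have h1 : z ∈ Ca := by
          rcases hPW z hzP with h | h
          · exact h
          · rcases (hmemuv z).mp h with h | h
            · exact absurd h hzc.1
            · exact absurd h hzc.2
        have h2 : z ∈ Cb := by
          rcases hQW z hzQ with h | h
          · exact h
          · rcases (hmemuv z).mp h with h | h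
            · exact absurd h hzc.1
            · exact absurd h hzc.2
        exact hdisjC z h1 h2
      have hdisjPQ : P.support.tail.Disjoint Q.support.tail := by
        intro z hzP hzQ
        have hzu : z ≠ u := hPtne z hzP
        have hzv : z ≠ v' := hQtne z hzQ
        rcases hPQsupp z (List.mem_of_mem_tail hzP) (List.mem_of_mem_tail hzQ) with h | h
        · exact hzu h
        · exact hzv h
      have hEdisj : ∀ e, e ∈ P.edges → e ∈ Q.edges → False := by
        intro e
        induction e using Sym2.ind with
        | _ z1 z2 =>
          intro heP heQ
          have hz1P : z1 ∈ P.support := P.fst_mem_support_of_mem_edges heP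
          have hz2P : z2 ∈ P.support := P.snd_mem_support_of_mem_edges heP
          have hz1Q : z1 ∈ Q.support := Q.fst_mem_support_of_mem_edges heQ
          have hz2Q : z2 ∈ Q.support := Q.snd_mem_support_of_mem_edges heQ
          have hadje : G.Adj z1 z2 := P.adj_of_mem_edges heP
          have hne12 : z1 ≠ z2 := hadje.ne
          rcases hPQsupp z1 hz1P hz1Q with rfl | rfl <;>
            rcases hPQsupp z2 hz2P hz2Q with rfl | rfl
          · exact hne12 rfl
          · exact hnadj' hadje
          · exact hnadj' hadje.symm
          · exact hne12 rfl
      have hCtrail : (P.append Q).IsTrail := by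
        rw [Walk.isTrail_def, Walk.edges_append, List.nodup_append]
        exact ⟨hPpath.isTrail.edges_nodup, hQpath.isTrail.edges_nodup, fun e he e' he' hee => hEdisj e he (hee ▸ he')⟩
      have hCtail : (P.append Q).support.tail = P.support.tail ++ Q.support.tail := by
        rw [Walk.support_append, P.support_eq_cons]
        simp
      have hCcycle : (P.append Q).IsCycle := by
        rw [Walk.isCycle_def]
        refine ⟨hCtrail, ?_, ?_⟩
        · intro h0
          have hl := congrArg Walk.length h0
          rw [Walk.length_append, Walk.length_nil] at hl
          omega
        · rw [hCtail, List.nodup_append]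
          refine ⟨?_, ?_, fun z hz z' hz' hzz => hdisjPQ hz (hzz ▸ hz')⟩
          · have := hPpath.support_nodup
            rw [P.support_eq_cons, List.nodup_cons] at this
            exact this.2
          · have := hQpath.support_nodup
            rw [Q.support_eq_cons, List.nodup_cons] at this
            exact this.2
      have hClen : 4 ≤ (P.append Q).length := by
        rw [Walk.length_append]; omega
      obtain ⟨x', hx', y', hy', hadjxy, hnedge⟩ := hG u (P.append Q) hCcycle hClen
      rw [Walk.mem_support_append_iff] at hx' hy'
      have hcross : ∀ z1 z2, z1 ∈ P.support → z1 ∉ Q.support → z2 ∈ Q.support →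
          z2 ∉ P.support → G.Adj z1 z2 → False := by
        intro z1 z2 h1 h1' h2 h2' hadjz
        have hz1Ca : z1 ∈ Ca := by
          rcases hPW z1 h1 with h | h
          · exact h
          · rcases (hmemuv z1).mp h with rfl | rfl
            · exact absurd Q.end_mem_support h1'
            · exact absurd Q.start_mem_support h1'
        have hz2Cb : z2 ∈ Cb := by
          rcases hQW z2 h2 with h | h
          · exact h
          · rcases (hmemuv z2).mp h with rfl | rfl
            · exact absurd P.start_mem_support h2'
            · exact absurd P.end_mem_support h2'
        obtain ⟨wa, hwa⟩ := hz1Ca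
        have hz2ST : z2 ∈ S \ T := hCbS hz2Cb
        have hz2Ca : z2 ∈ Ca := by
          refine ⟨wa.concat hadjz, ?_⟩
          intro z hz
          rw [Walk.support_concat, List.mem_append,
            List.mem_singleton] at hz
          rcases hz with hz | rfl
          · exact hwa z hz
          · exact hz2ST
        exact hdisjC z2 hz2Ca hz2Cb
      have hPedge : x' ∈ P.support → y' ∈ P.support → False := by
        intro h1 h2
        apply hnedge
        rw [Walk.edges_append, List.mem_append]
        exact Or.inl (hPfree x' y' h1 h2 hadjxy)
      have hQedge : x' ∈ Q.support → y' ∈ Q.support → False := by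
        intro h1 h2
        apply hnedge
        rw [Walk.edges_append, List.mem_append]
        exact Or.inr (hQfree x' y' h1 h2 hadjxy)
      rcases hx' with hxP | hxQ <;> rcases hy' with hyP | hyQ
      · exact hPedge hxP hyP
      · by_cases hxQ2 : x' ∈ Q.support
        · exact hQedge hxQ2 hyQ
        · by_cases hyP2 : y' ∈ P.support
          · exact hPedge hxP hyP2
          · exact hcross x' y' hxP hxQ2 hyQ hyP2 hadjxy
      · by_cases hyQ2 : y' ∈ Q.support
        · exact hQedge hxQ hyQ2
        · by_cases hxP2 : x' ∈ P.support
          · exact hPedge hxP2 hyP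
          · exact hcross y' x' hyP hyQ2 hxQ hxP2 hadjxy.symm
      · exact hQedge hxQ hyQ
    -- assemble the decomposition
    set A : Set V := Ca ∪ T with hA
    set B : Set V := S \ Ca with hB
    have hTS : T ⊆ S := fun x hx => (hT.1 hx).1
    have hABeq : A ∪ B = S := by
      apply Set.eq_of_subset_of_subset
      · rintro x (hx | hx)
        · rcases hx with hx | hx
          · exact (hCaS hx).1
          · exact hTS hx
        · exact hx.1
      · intro x hx
        by_cases hxCa : x ∈ Ca
        · exact Or.inl (Or.inl hxCa)
        · exact Or.inr ⟨hx, hxCa⟩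
    have hABint : A ∩ B = T := by
      apply Set.eq_of_subset_of_subset
      · rintro x ⟨hxA, hxS, hxnCa⟩
        rcases hxA with hx | hx
        · exact absurd hx hxnCa
        · exact hx
      · intro x hxT
        exact ⟨Or.inr hxT, hTS hxT, fun hxCa => (hCaS hxCa).2 hxT⟩
    have hsepAB : Separates G A B := by
      intro x hx y hy w hwsup
      by_contra hno
      push_neg at hno
      have hxCa : x ∈ Ca := by
        rcases hx.1 with h | h
        · exact h
        · exact absurd ((⟨hTS h, fun hc => (hCaS hc).2 h⟩) : x ∈ B) hx.2
      obtain ⟨wa, hwa⟩ := hxCa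
      have hyCa : y ∈ Ca := by
        refine ⟨wa.append w, ?_⟩
        intro z hz
        rw [Walk.mem_support_append_iff] at hz
        rcases hz with hz | hz
        · exact hwa z hz
        · have hzS : z ∈ S := by
            have := hwsup z hz
            rw [hABeq] at this
            exact this
          have hzT : z ∉ T := by
            intro hzT
            exact hno z hz (by rw [hABint]; exact hzT)
          exact ⟨hzS, hzT⟩
      exact hy.2 (Or.inl hyCa)
    have hAcard : A.ncard ≤ n := by
      have hsubA : A ⊆ S := by
        rintro x (hx | hx)
        · exact (hCaS hx).1
        · exact hTS hx
      have hbA : b ∉ A := by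
        rintro (hx | hx)
        · exact hbCa hx
        · exact hbT hx
      have hss : A ⊂ S := ⟨hsubA, fun hSA => hbA (hSA hbS)⟩
      have := Set.ncard_lt_ncard hss S.toFinite
      omega
    have hBcard : B.ncard ≤ n := by
      have hsubB : B ⊆ S := fun x hx => hx.1
      have haB : a ∉ B := fun hx => hx.2 haCa
      have hss : B ⊂ S := ⟨hsubB, fun hSB => haB (hSB haS)⟩
      have := Set.ncard_lt_ncard hss S.toFinite
      omega
    have hdec := DecomposableOn.decomp A B (by rw [hABint]; exact hTcomp) hsepAB
      (ih A hAcard) (ih B hBcard)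
    rwa [hABeq] at hdec

end ChordalAux

/-- **A finite undirected graph is decomposable if and only if it is chordal.** -/
theorem decomposable_iff_chordal [Fintype V] (G : SimpleGraph V) :
    Decomposable G ↔ Chordal G := by
  constructor
  · intro hdec v c hc hlen
    exact ChordalAux.chord_of_decomposableOn hdec v c hc hlen (fun z _ => Set.mem_univ z)
  · intro hch
    exact ChordalAux.decomposableOn_of_chordal hch (Set.univ.ncard) Set.univ le_rfl
end

section
/- A finite undirected graph G is decomposable if and only if its maximal cliques can be arranged in a junction tree, i.e., a tree whose vertices are the cliques of G such that for any two cliques Q_i and Q_j, the intersection Q_i ∩ Q_j is contained in every clique on the unique path in the tree between Q_i and Q_j. -/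
open SimpleGraph

variable {V : Type*}

/-- A maximal clique of `G`: a complete vertex set not properly contained in any other. -/
def MaxClique (G : SimpleGraph V) (s : Set V) : Prop :=
  G.IsClique s ∧ ∀ t : Set V, G.IsClique t → s ⊆ t → s = t

/-! Auxiliary definitions -/

/-- Maximal clique among cliques contained in `S`. -/
def MaxCliqueOn (G : SimpleGraph V) (S : Set V) (s : Set V) : Prop :=
  G.IsClique s ∧ s ⊆ S ∧ ∀ t : Set V, G.IsClique t → t ⊆ S → s ⊆ t → s = t

lemma isCompleteOn_iff_isClique {G : SimpleGraph V} {A : Set V} :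
    IsCompleteOn G A ↔ G.IsClique A := by
  constructor
  · intro h a ha b hb hab; exact h a ha b hb hab
  · intro h a ha b hb hab; exact h ha hb hab

lemma maxCliqueOn_univ (G : SimpleGraph V) :
    MaxCliqueOn G Set.univ = MaxClique G := by
  funext s
  apply propext
  constructor
  · rintro ⟨h1, _, h3⟩
    exact ⟨h1, fun t ht hst => h3 t ht (Set.subset_univ _) hst⟩
  · rintro ⟨h1, h3⟩
    exact ⟨h1, Set.subset_univ _, fun t ht _ hst => h3 t ht hst⟩

/-- Every clique contained in `S` extends to a maximal clique in `S` (finite case). -/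
lemma exists_maxCliqueOn [Finite V] (G : SimpleGraph V) {S c : Set V}
    (hc : G.IsClique c) (hcS : c ⊆ S) : ∃ s, MaxCliqueOn G S s ∧ c ⊆ s := by
  classical
  have hfin : {t : Set V | G.IsClique t ∧ t ⊆ S ∧ c ⊆ t}.Finite := Set.toFinite _
  have hne : {t : Set V | G.IsClique t ∧ t ⊆ S ∧ c ⊆ t}.Nonempty := ⟨c, hc, hcS, le_refl _⟩
  obtain ⟨s, hs, hmax⟩ : ∃ s ∈ {t : Set V | G.IsClique t ∧ t ⊆ S ∧ c ⊆ t}, ∀ t ∈ {t : Set V | G.IsClique t ∧ t ⊆ S ∧ c ⊆ t}, s ⊆ t → s = t := by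
    obtain ⟨s, hs⟩ := Set.Finite.exists_maximal hfin hne
    exact ⟨s, hs.1, fun t ht hst => le_antisymm hst (hs.2 ht hst)⟩
  refine ⟨s, ⟨hs.1, hs.2.1, ?_⟩, hs.2.2⟩
  intro t ht htS hst
  exact hmax t ⟨ht, htS, hs.2.2.trans hst⟩ hst

lemma Separates.symm {G : SimpleGraph V} {A B : Set V} (h : Separates G A B) :
    Separates G B A := by
  intro a ha b hb w hw
  obtain ⟨v, hv, hv2⟩ := h b hb a ha w.reverse
    (by intro v hv; rw [Walk.support_reverse] at hv
        exact Set.union_comm A B ▸ (hw v (List.mem_reverse.mp hv))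
        )
  rw [Walk.support_reverse] at hv
  exact ⟨v, List.mem_reverse.mp hv, Set.inter_comm A B ▸ hv2⟩

/-- Separation implies no edges between `A \ B` and `B \ A`. -/
lemma Separates.not_adj {G : SimpleGraph V} {A B : Set V} (h : Separates G A B)
    {a b : V} (ha : a ∈ A \ B) (hb : b ∈ B \ A) : ¬ G.Adj a b := by
  intro hadj
  obtain ⟨v, hv, hv2⟩ := h a ha b hb (Walk.cons hadj Walk.nil) (by
    intro v hv
    simp only [Walk.support_cons, Walk.support_nil, List.mem_cons, List.mem_singleton] at hv
    rcases hv with rfl | hv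
    · exact Or.inl ha.1
    · simp at hv; subst hv; exact Or.inr hb.1)
  simp only [Walk.support_cons, Walk.support_nil, List.mem_cons, List.mem_singleton] at hv
  rcases hv with rfl | hv
  · exact ha.2 hv2.2
  · simp at hv; subst hv; exact hb.2 hv2.1

/-- Under separation, every clique in `A ∪ B` lies in `A` or in `B`. -/
lemma clique_subset_or {G : SimpleGraph V} {A B : Set V} (h : Separates G A B)
    {t : Set V} (ht : G.IsClique t) (htAB : t ⊆ A ∪ B) : t ⊆ A ∨ t ⊆ B := by
  by_cases hA : t ⊆ A
  · exact Or.inl hA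
  · right
    obtain ⟨a, hat, haA⟩ := Set.not_subset.mp hA
    have haB : a ∈ B \ A := ⟨(htAB hat).resolve_left haA, haA⟩
    intro b hbt
    by_contra hbB
    have hbA : b ∈ A \ B := ⟨(htAB hbt).resolve_right hbB, hbB⟩
    have hne : b ≠ a := fun e => haA (e ▸ hbA.1)
    exact (h.not_adj hbA haB) (ht hbt hat hne)

/-! Perfect sequences -/

/-- Running intersection property for a list of vertex sets. -/
def RIP (L : List (Set V)) : Prop :=
  ∀ (l1 : List (Set V)) (s : Set V) (l2 : List (Set V)), L = l1 ++ s :: l2 → l1 ≠ [] → ∃ t ∈ l1, ∀ b ∈ l1, s ∩ b ⊆ t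

/-- A perfect enumeration of the maximal cliques within `S`, starting above `c`. -/
def PerfectEnum (G : SimpleGraph V) (S c : Set V) (L : List (Set V)) : Prop :=
  (∃ h t, L = h :: t ∧ c ⊆ h) ∧ L.Nodup ∧ (∀ s ∈ L, MaxCliqueOn G S s) ∧
    (∀ s, MaxCliqueOn G S s → s ∈ L) ∧ RIP L

lemma RIP_append {L1 L2 : List (Set V)} (h1 : RIP L1)
    (h2 : ∀ pre s post, L2 = pre ++ s :: post →
      ∃ t ∈ L1 ++ pre, ∀ b ∈ L1 ++ pre, s ∩ b ⊆ t) :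
    RIP (L1 ++ L2) := by
  intro l1 s l2 heq hne
  rcases List.append_eq_append_iff.mp heq with ⟨a', ha1, ha2⟩ | ⟨c', hc1, hc2⟩
  · subst ha1
    exact h2 a' s l2 ha2
  · cases c' with
    | nil =>
      have hl1 : l1 = L1 := by simpa using hc1.symm
      subst hl1
      obtain ⟨t, ht, hall⟩ := h2 [] s l2 (by simpa using hc2.symm)
      exact ⟨t, by simpa using ht, by simpa using hall⟩
    | cons c0 c'' =>
      injection hc2 with h01 h02
      subst h01
      exact h1 l1 s c'' hc1 hne

section MC

variable {G : SimpleGraph V} {A B : Set V}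

lemma maxCliqueOn_subset_inter_eq (hAB : IsCompleteOn G (A ∩ B))
    {x : Set V} (hx : MaxCliqueOn G A x) (hxB : x ⊆ B) : x = A ∩ B :=
  hx.2.2 (A ∩ B) (isCompleteOn_iff_isClique.mp hAB) Set.inter_subset_left
    (Set.subset_inter hx.2.1 hxB)

lemma maxCliqueOn_subset_inter_eq' (hAB : IsCompleteOn G (A ∩ B))
    {x : Set V} (hx : MaxCliqueOn G B x) (hxA : x ⊆ A) : x = A ∩ B := by
  have := hx.2.2 (A ∩ B) (isCompleteOn_iff_isClique.mp hAB) Set.inter_subset_right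
    (Set.subset_inter hxA hx.2.1)
  exact this

/-- A maximal clique of `A` different from `A ∩ B` is a maximal clique of `A ∪ B`. -/
lemma maxCliqueOn_union_left (hAB : IsCompleteOn G (A ∩ B)) (hsep : Separates G A B)
    {x : Set V} (hx : MaxCliqueOn G A x) (hne : x ≠ A ∩ B) : MaxCliqueOn G (A ∪ B) x := by
  refine ⟨hx.1, hx.2.1.trans Set.subset_union_left, ?_⟩
  intro t ht htU hxt
  rcases clique_subset_or hsep ht htU with htA | htB
  · exact hx.2.2 t ht htA hxt
  · exact absurd (maxCliqueOn_subset_inter_eq hAB hx (hxt.trans htB)) hne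

lemma maxCliqueOn_union_right (hAB : IsCompleteOn G (A ∩ B)) (hsep : Separates G A B)
    {x : Set V} (hx : MaxCliqueOn G B x) (hne : x ≠ A ∩ B) : MaxCliqueOn G (A ∪ B) x := by
  refine ⟨hx.1, hx.2.1.trans Set.subset_union_right, ?_⟩
  intro t ht htU hxt
  rcases clique_subset_or hsep ht htU with htA | htB
  · exact absurd (maxCliqueOn_subset_inter_eq' hAB hx (hxt.trans htA)) hne
  · exact hx.2.2 t ht htB hxt

lemma maxCliqueOn_union_inter (hsep : Separates G A B)
    (h1 : MaxCliqueOn G A (A ∩ B)) (h2 : MaxCliqueOn G B (A ∩ B)) :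
    MaxCliqueOn G (A ∪ B) (A ∩ B) := by
  refine ⟨h1.1, Set.inter_subset_left.trans Set.subset_union_left, ?_⟩
  intro t ht htU hxt
  rcases clique_subset_or hsep ht htU with htA | htB
  · exact h1.2.2 t ht htA hxt
  · exact h2.2.2 t ht htB hxt

lemma maxCliqueOn_union_cases (hsep : Separates G A B)
    {s : Set V} (hs : MaxCliqueOn G (A ∪ B) s) :
    MaxCliqueOn G A s ∨ MaxCliqueOn G B s := by
  rcases clique_subset_or hsep hs.1 hs.2.1 with hA | hB
  · exact Or.inl ⟨hs.1, hA, fun t ht htA hst =>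
      hs.2.2 t ht (htA.trans Set.subset_union_left) hst⟩
  · exact Or.inr ⟨hs.1, hB, fun t ht htB hst =>
      hs.2.2 t ht (htB.trans Set.subset_union_right) hst⟩

end MC

section Combine

variable {G : SimpleGraph V} {A B : Set V}

lemma perfectEnum_union [Finite V] {c : Set V}
    (hAB : IsCompleteOn G (A ∩ B)) (hsep : Separates G A B)
    (hc : G.IsClique c) (hcA : c ⊆ A)
    (IHA : ∀ c', G.IsClique c' → c' ⊆ A → ∃ L, PerfectEnum G A c' L)
    (IHB : ∀ c', G.IsClique c' → c' ⊆ B → ∃ L, PerfectEnum G B c' L) :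
    ∃ L, PerfectEnum G (A ∪ B) c L := by
  classical
  have hABclique : G.IsClique (A ∩ B) := isCompleteOn_iff_isClique.mp hAB
  obtain ⟨LA, hLAhead, hLAnd, hLAmem, hLAcompl, hLArip⟩ := IHA c hc hcA
  obtain ⟨LB, hLBhead, hLBnd, hLBmem, hLBcompl, hLBrip⟩ :=
    IHB (A ∩ B) hABclique Set.inter_subset_right
  obtain ⟨u, TB, rfl, hu⟩ := hLBhead
  -- basic facts
  have huB : MaxCliqueOn G B u := hLBmem u (List.mem_cons_self)
  have hsubA : ∀ x ∈ LA, x ⊆ A := fun x hx => (hLAmem x hx).2.1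
  have hsubB : ∀ x ∈ u :: TB, x ⊆ B := fun x hx => (hLBmem x hx).2.1
  obtain ⟨w, hwmax, hWsup⟩ := exists_maxCliqueOn G hABclique Set.inter_subset_left
  have hwLA : w ∈ LA := hLAcompl w hwmax
  -- the key pointwise computation
  have key : ∀ s b : Set V, s ⊆ B → b ⊆ A → s ∩ b ⊆ s ∩ u := by
    intro s b hsB hbA x hx
    exact ⟨hx.1, hu ⟨hbA hx.2, hsB hx.1⟩⟩
  have keyw : ∀ s b : Set V, s ⊆ B → b ⊆ A → s ∩ b ⊆ w := by
    intro s b hsB hbA x hx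
    exact hWsup ⟨hbA hx.2, hsB hx.1⟩
  by_cases hin : (A ∩ B) ∈ LA
  · -- Case 1 : A ∩ B is a maximal clique of A; replace it with u.
    set f : Set V → Set V := fun x => if x = A ∩ B then u else x with hf
    have hinterA : MaxCliqueOn G A (A ∩ B) := hLAmem _ hin
    set LA' : List (Set V) := LA.map f with hLA'
    have huLA' : u ∈ LA' := by
      refine List.mem_map.mpr ⟨A ∩ B, hin, ?_⟩
      simp [hf]
    have hux : ∀ z ∈ LA, z = u → z = A ∩ B := by
      intro z hz hzu
      exact maxCliqueOn_subset_inter_eq hAB (hLAmem z hz) (hzu ▸ huB.2.1)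
    have hfinj : ∀ x ∈ LA, ∀ y ∈ LA, f x = f y → x = y := by
      intro x hx y hy hxy
      by_cases h1 : x = A ∩ B <;> by_cases h2 : y = A ∩ B
      · rw [h1, h2]
      · simp only [hf, if_pos h1, if_neg h2] at hxy
        exact absurd (hux y hy hxy.symm) h2
      · simp only [hf, if_neg h1, if_pos h2] at hxy
        exact absurd (hux x hx hxy) h1
      · simpa only [hf, if_neg h1, if_neg h2] using hxy
    have hTBnd : TB.Nodup := (List.nodup_cons.mp hLBnd).2
    have huTB : u ∉ TB := (List.nodup_cons.mp hLBnd).1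
    have hTBne : ∀ z ∈ TB, z ≠ A ∩ B := by
      intro z hz hzint
      have : z = u := (hLBmem z (List.mem_cons_of_mem _ hz)).2.2 u huB.1 huB.2.1
        (hzint ▸ hu)
      exact huTB (this ▸ hz)
    refine ⟨LA' ++ TB, ?_, ?_, ?_, ?_, ?_⟩
    · -- head
      obtain ⟨a0, tA, heq, hca0⟩ := hLAhead
      refine ⟨f a0, (tA.map f) ++ TB, by rw [hLA', heq]; simp, ?_⟩
      by_cases h0 : a0 = A ∩ B
      · simp only [hf, if_pos h0]
        exact (h0 ▸ hca0).trans hu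
      · simpa only [hf, if_neg h0] using hca0
    · -- nodup
      refine List.Nodup.append (List.Nodup.map_on hfinj hLAnd) hTBnd ?_
      intro z hz1 hz2
      obtain ⟨x, hx, rfl⟩ := List.mem_map.mp hz1
      by_cases h0 : x = A ∩ B
      · exact huTB (by simpa only [hf, if_pos h0] using hz2)
      · have hfx : f x = x := if_neg h0
        rw [hfx] at hz2
        exact hTBne x hz2 (maxCliqueOn_subset_inter_eq hAB (hLAmem x hx)
          (hLBmem x (List.mem_cons_of_mem _ hz2)).2.1)
    · -- membership
      intro z hz
      rcases List.mem_append.mp hz with hz | hz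
      · obtain ⟨x, hx, rfl⟩ := List.mem_map.mp hz
        by_cases h0 : x = A ∩ B
        · rw [hf]; simp only [if_pos h0]
          by_cases h1 : u = A ∩ B
          · rw [h1]
            exact maxCliqueOn_union_inter hsep hinterA (h1 ▸ huB)
          · exact maxCliqueOn_union_right hAB hsep huB h1
        · rw [hf]; simp only [if_neg h0]
          exact maxCliqueOn_union_left hAB hsep (hLAmem x hx) h0
      · exact maxCliqueOn_union_right hAB hsep (hLBmem z (List.mem_cons_of_mem _ hz))
          (hTBne z hz)
    · -- completeness
      intro z hz
      rcases maxCliqueOn_union_cases hsep hz with hzA | hzB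
      · by_cases h0 : z = A ∩ B
        · have hzu : z = u := hz.2.2 u huB.1 (huB.2.1.trans Set.subset_union_right)
            (h0 ▸ hu)
          exact List.mem_append.mpr (Or.inl (hzu ▸ huLA'))
        · refine List.mem_append.mpr (Or.inl (List.mem_map.mpr ⟨z, hLAcompl z hzA, if_neg h0⟩))
      · rcases List.mem_cons.mp (hLBcompl z hzB) with rfl | hz2
        · exact List.mem_append.mpr (Or.inl huLA')
        · exact List.mem_append.mpr (Or.inr hz2)
    · -- RIP
      refine RIP_append ?_ ?_
      · -- RIP LA'
        intro l1' s' l2' heq hne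
        rw [hLA'] at heq
        obtain ⟨l1, rest, hsplit, hmap1, hmap2⟩ := List.map_eq_append_iff.mp heq
        obtain ⟨sa, l2, hrest, hfs, hmap3⟩ := List.map_eq_cons_iff.mp hmap2
        subst hrest
        subst hfs
        have hLAsplit : LA = l1 ++ sa :: l2 := hsplit
        obtain ⟨t, ht, hall⟩ := hLArip l1 sa l2 hLAsplit
          (by intro h; subst h; simp at hmap1; exact hne (by rw [← hmap1]))
        have hsnotl1 : sa ∉ l1 := by
          have h := hLAnd
          rw [hLAsplit] at h
          intro hs
          exact (List.disjoint_of_nodup_append h) hs (List.mem_cons_self)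
        refine ⟨f t, by rw [← hmap1]; exact List.mem_map_of_mem ht, ?_⟩
        intro b' hb'
        rw [← hmap1] at hb'
        obtain ⟨b, hb, rfl⟩ := List.mem_map.mp hb'
        have hstep : f sa ∩ f b ⊆ t := by
          by_cases h1 : sa = A ∩ B <;> by_cases h2 : b = A ∩ B
          · exact absurd (h1.trans h2.symm) (fun e => hsnotl1 (e ▸ hb))
          · simp only [hf, if_pos h1, if_neg h2]
            intro x hx
            exact hall b hb ⟨h1 ▸ ⟨hsubA b (hLAsplit ▸ List.mem_append_left _ hb) hx.2,
              huB.2.1 hx.1⟩, hx.2⟩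
          · simp only [hf, if_neg h1, if_pos h2]
            intro x hx
            refine hall b hb ⟨hx.1, h2 ▸ ⟨?_, ?_⟩⟩
            · exact hsubA sa (hLAsplit ▸ (by simp : sa ∈ l1 ++ sa :: l2)) hx.1
            · exact huB.2.1 hx.2
          · simp only [hf, if_neg h1, if_neg h2]
            exact hall b hb
        refine hstep.trans ?_
        by_cases h3 : t = A ∩ B
        · simp only [hf, if_pos h3]; exact h3 ▸ hu
        · simp only [hf, if_neg h3]
          exact subset_rfl
      · -- glue
        intro pre s post hTB
        have hsTB : s ∈ TB := by rw [hTB]; simp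
        have hsB : s ⊆ B := hsubB s (List.mem_cons_of_mem _ hsTB)
        obtain ⟨t, ht, hall⟩ := hLBrip (u :: pre) s post (by rw [hTB]; rfl) (by simp)
        refine ⟨t, ?_, ?_⟩
        · rcases List.mem_cons.mp ht with rfl | ht2
          · exact List.mem_append_left _ huLA'
          · exact List.mem_append_right _ ht2
        · intro b hb
          rcases List.mem_append.mp hb with hb | hb
          · obtain ⟨x, hx, rfl⟩ := List.mem_map.mp hb
            by_cases h0 : x = A ∩ B
            · simp only [hf, if_pos h0]
              exact hall u (List.mem_cons_self)
            · simp only [hf, if_neg h0]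
              exact (key s x hsB (hsubA x hx)).trans (hall u (List.mem_cons_self))
          · exact hall b (List.mem_cons_of_mem _ hb)

  · -- A ∩ B is not a maximal clique of A
    have hTBnd : TB.Nodup := (List.nodup_cons.mp hLBnd).2
    have huTB : u ∉ TB := (List.nodup_cons.mp hLBnd).1
    have hLAne : ∀ z ∈ LA, z ≠ A ∩ B := fun z hz hzint => hin (hzint ▸ hz)
    have hdisj : ∀ z ∈ LA, z ∈ u :: TB → False := by
      intro z hz1 hz2
      exact hLAne z hz1 (maxCliqueOn_subset_inter_eq hAB (hLAmem z hz1) (hLBmem z hz2).2.1)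
    have hheadgen : ∀ X : List (Set V), ∃ h t, LA ++ X = h :: t ∧ c ⊆ h := by
      intro X
      obtain ⟨a0, tA, heq, hca0⟩ := hLAhead
      exact ⟨a0, tA ++ X, by rw [heq]; rfl, hca0⟩
    by_cases hdrop : u = A ∩ B ∧ ¬ MaxCliqueOn G (A ∪ B) u
    · -- drop u
      obtain ⟨huint, hunotmax⟩ := hdrop
      refine ⟨LA ++ TB, hheadgen TB, ?_, ?_, ?_, ?_⟩
      · exact List.Nodup.append hLAnd hTBnd
          (fun z hz1 hz2 => hdisj z hz1 (List.mem_cons_of_mem _ hz2))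
      · intro z hz
        rcases List.mem_append.mp hz with hz | hz
        · exact maxCliqueOn_union_left hAB hsep (hLAmem z hz) (hLAne z hz)
        · refine maxCliqueOn_union_right hAB hsep (hLBmem z (List.mem_cons_of_mem _ hz)) ?_
          intro hzint
          exact huTB ((((hLBmem z (List.mem_cons_of_mem _ hz)).2.2 u huB.1 huB.2.1
            (hzint ▸ hu))) ▸ hz)
      · intro z hz
        rcases maxCliqueOn_union_cases hsep hz with hzA | hzB
        · exact List.mem_append_left _ (hLAcompl z hzA)
        · rcases List.mem_cons.mp (hLBcompl z hzB) with rfl | hz2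
          · exact absurd hz hunotmax
          · exact List.mem_append_right _ hz2
      · refine RIP_append hLArip ?_
        intro pre s post hTB
        have hsB : s ⊆ B := hsubB s (List.mem_cons_of_mem _ (by rw [hTB]; simp))
        obtain ⟨t, ht, hall⟩ := hLBrip (u :: pre) s post (by rw [hTB]; rfl) (by simp)
        by_cases h0 : t = u
        · refine ⟨w, List.mem_append_left _ hwLA, ?_⟩
          intro b hb
          rcases List.mem_append.mp hb with hb | hb
          · exact keyw s b hsB (hsubA b hb)
          · refine (hall b (List.mem_cons_of_mem _ hb)).trans ?_
            rw [h0, huint]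
            exact hWsup
        · have ht2 : t ∈ pre := (List.mem_cons.mp ht).resolve_left h0
          refine ⟨t, List.mem_append_right _ ht2, ?_⟩
          intro b hb
          rcases List.mem_append.mp hb with hb | hb
          · exact (key s b hsB (hsubA b hb)).trans (hall u (List.mem_cons_self))
          · exact hall b (List.mem_cons_of_mem _ hb)
    · -- keep everything
      refine ⟨LA ++ (u :: TB), hheadgen _, List.Nodup.append hLAnd hLBnd hdisj, ?_, ?_, ?_⟩
      · intro z hz
        rcases List.mem_append.mp hz with hz | hz
        · exact maxCliqueOn_union_left hAB hsep (hLAmem z hz) (hLAne z hz)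
        · by_cases h0 : z = A ∩ B
          · have hzu : z = u := (hLBmem z hz).2.2 u huB.1 huB.2.1 (h0 ▸ hu)
            have huint : u = A ∩ B := hzu ▸ h0
            have : MaxCliqueOn G (A ∪ B) u := by
              by_contra hcon
              exact hdrop ⟨huint, hcon⟩
            exact hzu ▸ this
          · exact maxCliqueOn_union_right hAB hsep (hLBmem z hz) h0
      · intro z hz
        rcases maxCliqueOn_union_cases hsep hz with hzA | hzB
        · exact List.mem_append_left _ (hLAcompl z hzA)
        · exact List.mem_append_right _ (hLBcompl z hzB)
      · refine RIP_append hLArip ?_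
        intro pre s post hsplit
        cases pre with
        | nil =>
          have hsu : s = u := by
            have := hsplit
            simp only [List.nil_append] at this
            exact (List.cons.injEq _ _ _ _ ▸ this).1.symm
          refine ⟨w, List.mem_append_left _ hwLA, ?_⟩
          intro b hb
          rcases List.mem_append.mp hb with hb | hb
          · exact hsu ▸ keyw u b huB.2.1 (hsubA b hb)
          · simp at hb
        | cons p0 pre' =>
          have hp0 : p0 = u := by
            have := hsplit
            simp only [List.cons_append] at this
            exact ((List.cons.injEq _ _ _ _ ▸ this).1).symm
          have hsB : s ⊆ B := hsubB s (by rw [hsplit]; simp)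
          obtain ⟨t, ht, hall⟩ := hLBrip (p0 :: pre') s post hsplit (by simp)
          refine ⟨t, List.mem_append_right _ ht, ?_⟩
          intro b hb
          rcases List.mem_append.mp hb with hb | hb
          · exact (key s b hsB (hsubA b hb)).trans
              (hp0 ▸ hall p0 (List.mem_cons_self))
          · exact hall b hb


end Combine

lemma DecomposableOn.perfectEnum [Finite V] {G : SimpleGraph V} {S : Set V}
    (h : DecomposableOn G S) :
    ∀ c, G.IsClique c → c ⊆ S → ∃ L, PerfectEnum G S c L := by
  induction h with
  | complete A hA =>
    intro c hc hcA
    have hAclique : G.IsClique A := isCompleteOn_iff_isClique.mp hA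
    refine ⟨[A], ⟨A, [], rfl, hcA⟩, List.nodup_singleton _, ?_, ?_, ?_⟩
    · intro s hs
      rw [List.mem_singleton] at hs; subst hs
      exact ⟨hAclique, subset_rfl, fun t ht htA hst => subset_antisymm hst htA⟩
    · intro s hs
      rw [List.mem_singleton]
      exact hs.2.2 A hAclique subset_rfl hs.2.1
    · intro l1 s l2 heq hne
      exfalso
      have := congrArg List.length heq
      simp at this
      cases l1 with
      | nil => exact hne rfl
      | cons a l' => simp at this; omega
  | decomp A B hAB hsep hA hB IHA IHB =>
    intro c hc hcS
    rcases clique_subset_or hsep hc hcS with hcA | hcB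
    · exact perfectEnum_union hAB hsep hc hcA IHA IHB
    · have hBA : IsCompleteOn G (B ∩ A) := by rwa [Set.inter_comm]
      obtain ⟨L, hL⟩ := perfectEnum_union hBA hsep.symm hc hcB IHB IHA
      rw [Set.union_comm B A] at hL
      exact ⟨L, hL⟩

section ParentGraph

variable {α : Type*} {T : SimpleGraph α} {r : α → ℕ} {par : α → α}

/-- Parent structure hypothesis: every edge joins a vertex to its parent,
with strictly smaller rank. -/
def ParentStruct (T : SimpleGraph α) (r : α → ℕ) (par : α → α) : Prop :=
  ∀ a b, T.Adj a b → (par a = b ∧ r b < r a) ∨ (par b = a ∧ r a < r b)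

lemma list_exists_max (r : α → ℕ) : ∀ (l : List α), l ≠ [] → ∃ m ∈ l, ∀ x ∈ l, r x ≤ r m := by
  intro l
  induction l with
  | nil => intro h; exact absurd rfl h
  | cons a l ih =>
    intro _
    cases l with
    | nil => exact ⟨a, List.mem_singleton_self a, by intro x hx; simp at hx; subst hx; exact le_refl _⟩
    | cons b l' =>
      obtain ⟨m, hm, hmax⟩ := ih (by simp)
      by_cases h : r a ≤ r m
      · refine ⟨m, List.mem_cons_of_mem _ hm, ?_⟩
        intro x hx
        rcases List.mem_cons.mp hx with rfl | hx
        · exact h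
        · exact hmax x hx
      · refine ⟨a, List.mem_cons_self, ?_⟩
        intro x hx
        rcases List.mem_cons.mp hx with rfl | hx
        · exact le_refl _
        · exact (hmax x hx).trans (le_of_not_ge h)

/-- An interior vertex of a path has two distinct neighbours on the path. -/
lemma interior_two_neighbors :
    ∀ {i j : α} (w : T.Walk i j), w.IsPath → ∀ {m}, m ∈ w.support → m ≠ i → m ≠ j →
      ∃ x ∈ w.support, ∃ y ∈ w.support, x ≠ y ∧ T.Adj x m ∧ T.Adj m y := by
  intro i j w
  induction w with
  | nil =>
    intro _ m hm hmi _
    simp at hm; exact absurd hm hmi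
  | @cons i v j hadj w' ih =>
    intro hw m hm hmi hmj
    rw [SimpleGraph.Walk.support_cons, List.mem_cons] at hm
    rcases hm with rfl | hm
    · exact absurd rfl hmi
    · by_cases hmv : m = v
      · subst hmv
        cases w' with
        | nil => exact absurd rfl hmj
        | @cons v y j hadj2 w'' =>
          refine ⟨i, SimpleGraph.Walk.start_mem_support _, y, ?_, ?_, hadj, hadj2⟩
          · rw [SimpleGraph.Walk.support_cons]
            exact List.mem_cons_of_mem _ (by
              rw [SimpleGraph.Walk.support_cons]
              exact List.mem_cons_of_mem _ (SimpleGraph.Walk.start_mem_support _))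
          · intro h
            have hp := (SimpleGraph.Walk.cons_isPath_iff hadj _).mp hw
            apply hp.2
            rw [h, SimpleGraph.Walk.support_cons]
            exact List.mem_cons_of_mem _ (SimpleGraph.Walk.start_mem_support _)
      · obtain ⟨x, hx, y, hy, hxy, h1, h2⟩ :=
          ih ((SimpleGraph.Walk.cons_isPath_iff hadj _).mp hw).1 hm hmv hmj
        exact ⟨x, by rw [SimpleGraph.Walk.support_cons]; exact List.mem_cons_of_mem _ hx,
          y, by rw [SimpleGraph.Walk.support_cons]; exact List.mem_cons_of_mem _ hy,
          hxy, h1, h2⟩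

/-- On a path, all ranks are bounded by the rank of one of the endpoints. -/
lemma path_rank_le (H : ParentStruct T r par) {i j : α} (w : T.Walk i j)
    (hw : w.IsPath) : (∀ k ∈ w.support, r k ≤ r i) ∨ (∀ k ∈ w.support, r k ≤ r j) := by
  obtain ⟨m, hm, hmax⟩ := list_exists_max r w.support (by
    have := w.start_mem_support
    intro h; rw [h] at this; simp at this)
  by_cases hmi : m = i
  · exact Or.inl (fun k hk => hmi ▸ hmax k hk)
  by_cases hmj : m = j
  · exact Or.inr (fun k hk => hmj ▸ hmax k hk)
  exfalso
  obtain ⟨x, hx, y, hy, hxy, h1, h2⟩ := interior_two_neighbors w hw hm hmi hmj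
  have hxm : x = par m := by
    rcases H x m h1 with ⟨h, hr⟩ | ⟨h, hr⟩
    · exact absurd hr (not_lt.mpr (hmax x hx))
    · exact h.symm
  have hym : y = par m := by
    rcases H m y h2 with ⟨h, hr⟩ | ⟨h, hr⟩
    · exact h.symm
    · exact absurd hr (not_lt.mpr (hmax y hy))
  exact hxy (hxm.trans hym.symm)

end ParentGraph

section ParentGraph2

open SimpleGraph.Walk

variable {α : Type*} {T : SimpleGraph α} {r : α → ℕ} {par : α → α}

lemma path_unique_aux (H : ParentStruct T r par) :
    ∀ n : ℕ, ∀ (i j : α) (w1 w2 : T.Walk i j), w1.IsPath → w2.IsPath →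
      w1.length + w2.length ≤ n →
      (∀ k ∈ w1.support, r k ≤ r i) → (∀ k ∈ w2.support, r k ≤ r i) → w1 = w2 := by
  intro n
  induction n using Nat.strong_induction_on with
  | _ n ihn =>
    intro i j w1 w2 hw1 hw2 hlen hm1 hm2
    by_cases hij : i = j
    · subst hij
      rw [SimpleGraph.Walk.isPath_iff_eq_nil.mp hw1,
        SimpleGraph.Walk.isPath_iff_eq_nil.mp hw2]
    · cases w1 with
      | nil => exact absurd rfl hij
      | @cons _ x1 _ h1 w1' =>
        cases w2 with
        | nil => exact absurd rfl hij
        | @cons _ x2 _ h2 w2' =>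
          have hx1 : x1 = par i := by
            rcases H i x1 h1 with ⟨h, _⟩ | ⟨_, hr⟩
            · exact h.symm
            · exfalso
              refine absurd hr (not_lt.mpr (hm1 x1 ?_))
              rw [support_cons]
              exact List.mem_cons_of_mem _ (start_mem_support _)
          have hx2 : x2 = par i := by
            rcases H i x2 h2 with ⟨h, _⟩ | ⟨_, hr⟩
            · exact h.symm
            · exfalso
              refine absurd hr (not_lt.mpr (hm2 x2 ?_))
              rw [support_cons]
              exact List.mem_cons_of_mem _ (start_mem_support _)
          have hx12 : x2 = x1 := hx2.trans hx1.symm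
          subst hx12
          have hp1 : w1'.IsPath := ((cons_isPath_iff h1 _).mp hw1).1
          have hp2 : w2'.IsPath := ((cons_isPath_iff h2 _).mp hw2).1
          have hlen' : w1'.length + w2'.length < n := by
            simp only [length_cons] at hlen
            omega
          have hW : w1' = w2' := by
            by_cases hr : r j ≤ r x2
            · have b1 : ∀ k ∈ w1'.support, r k ≤ r x2 := by
                intro k hk
                rcases path_rank_le H w1' hp1 with hb | hb
                · exact hb k hk
                · exact (hb k hk).trans hr
              have b2 : ∀ k ∈ w2'.support, r k ≤ r x2 := by
                intro k hk
                rcases path_rank_le H w2' hp2 with hb | hb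
                · exact hb k hk
                · exact (hb k hk).trans hr
              exact ihn _ hlen' x2 j w1' w2' hp1 hp2 le_rfl b1 b2
            · have hr' : r x2 ≤ r j := le_of_not_ge hr
              have b1 : ∀ k ∈ w1'.reverse.support, r k ≤ r j := by
                intro k hk
                rw [support_reverse, List.mem_reverse] at hk
                rcases path_rank_le H w1' hp1 with hb | hb
                · exact (hb k hk).trans hr'
                · exact hb k hk
              have b2 : ∀ k ∈ w2'.reverse.support, r k ≤ r j := by
                intro k hk
                rw [support_reverse, List.mem_reverse] at hk
                rcases path_rank_le H w2' hp2 with hb | hb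
                · exact (hb k hk).trans hr'
                · exact hb k hk
              have := ihn _ hlen' j x2 w1'.reverse w2'.reverse hp1.reverse hp2.reverse
                (by simp) b1 b2
              have h2 := congrArg SimpleGraph.Walk.reverse this
              rwa [reverse_reverse, reverse_reverse] at h2
          rw [hW]
  
lemma path_unique (H : ParentStruct T r par) {i j : α} (w1 w2 : T.Walk i j)
    (hw1 : w1.IsPath) (hw2 : w2.IsPath) : w1 = w2 := by
  by_cases hr : r j ≤ r i
  · have b : ∀ (w : T.Walk i j), w.IsPath → ∀ k ∈ w.support, r k ≤ r i := by
      intro w hw k hk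
      rcases path_rank_le H w hw with hb | hb
      · exact hb k hk
      · exact (hb k hk).trans hr
    exact path_unique_aux H (w1.length + w2.length) i j w1 w2 hw1 hw2 le_rfl
      (b w1 hw1) (b w2 hw2)
  · have hr' : r i ≤ r j := le_of_not_ge hr
    have b : ∀ (w : T.Walk i j), w.IsPath → ∀ k ∈ w.reverse.support, r k ≤ r j := by
      intro w hw k hk
      rw [support_reverse, List.mem_reverse] at hk
      rcases path_rank_le H w hw with hb | hb
      · exact (hb k hk).trans hr'
      · exact hb k hk
    have := path_unique_aux H (w1.reverse.length + w2.reverse.length) j i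
      w1.reverse w2.reverse hw1.reverse hw2.reverse le_rfl (b w1 hw1) (b w2 hw2)
    have h2 := congrArg SimpleGraph.Walk.reverse this
    rwa [reverse_reverse, reverse_reverse] at h2

lemma rip_aux {W : Type*} (H : ParentStruct T r par) (rinj : Function.Injective r)
    {f : α → Set W} (Hf : ∀ a b, r b < r a → f a ∩ f b ⊆ f (par a)) :
    ∀ n : ℕ, ∀ (i j : α) (w : T.Walk i j), w.IsPath → w.length ≤ n →
      (∀ k ∈ w.support, r k ≤ r i) → ∀ k ∈ w.support, f i ∩ f j ⊆ f k := by
  intro n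
  induction n using Nat.strong_induction_on with
  | _ n ihn =>
    intro i j w hw hlen hmax k hk
    by_cases hij : i = j
    · subst hij
      rw [SimpleGraph.Walk.isPath_iff_eq_nil.mp hw] at hk
      simp at hk
      subst hk
      exact Set.inter_subset_left
    · cases w with
      | nil => exact absurd rfl hij
      | @cons _ x _ h1 w' =>
        have hx : x = par i := by
          rcases H i x h1 with ⟨h, _⟩ | ⟨_, hr⟩
          · exact h.symm
          · exfalso
            refine absurd hr (not_lt.mpr (hmax x ?_))
            rw [support_cons]
            exact List.mem_cons_of_mem _ (start_mem_support _)
        have hrj : r j < r i := by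
          have hle : r j ≤ r i := hmax j (end_mem_support _)
          rcases lt_or_eq_of_le hle with h | h
          · exact h
          · exact absurd (rinj h) (Ne.symm hij)
        have hstep : f i ∩ f j ⊆ f x := by
          rw [hx]
          exact Hf i j hrj
        have hp' : w'.IsPath := ((cons_isPath_iff h1 _).mp hw).1
        rw [support_cons, List.mem_cons] at hk
        rcases hk with rfl | hk
        · exact Set.inter_subset_left
        · have hsub : f i ∩ f j ⊆ f x ∩ f j :=
            Set.subset_inter hstep Set.inter_subset_right
          refine hsub.trans ?_
          have hlen' : w'.length < n := by
            simp only [length_cons] at hlen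
            omega
          by_cases hr : r j ≤ r x
          · have b : ∀ k ∈ w'.support, r k ≤ r x := by
              intro k' hk'
              rcases path_rank_le H w' hp' with hb | hb
              · exact hb k' hk'
              · exact (hb k' hk').trans hr
            exact ihn _ hlen' x j w' hp' le_rfl b k hk
          · have hr' : r x ≤ r j := le_of_not_ge hr
            have b : ∀ k ∈ w'.reverse.support, r k ≤ r j := by
              intro k' hk'
              rw [support_reverse, List.mem_reverse] at hk'
              rcases path_rank_le H w' hp' with hb | hb
              · exact (hb k' hk').trans hr'
              · exact hb k' hk'
            have := ihn _ (by rw [length_reverse]; exact hlen') j x w'.reverse hp'.reverse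
              le_rfl b k (by rw [support_reverse, List.mem_reverse]; exact hk)
            rw [Set.inter_comm]
            exact this

lemma rip_path {W : Type*} (H : ParentStruct T r par) (rinj : Function.Injective r)
    {f : α → Set W} (Hf : ∀ a b, r b < r a → f a ∩ f b ⊆ f (par a))
    {i j : α} (w : T.Walk i j) (hw : w.IsPath) :
    ∀ k ∈ w.support, f i ∩ f j ⊆ f k := by
  intro k hk
  by_cases hr : r j ≤ r i
  · have b : ∀ k' ∈ w.support, r k' ≤ r i := by
      intro k' hk'
      rcases path_rank_le H w hw with hb | hb
      · exact hb k' hk'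
      · exact (hb k' hk').trans hr
    exact rip_aux H rinj Hf w.length i j w hw le_rfl b k hk
  · have hr' : r i ≤ r j := le_of_not_ge hr
    have b : ∀ k' ∈ w.reverse.support, r k' ≤ r j := by
      intro k' hk'
      rw [support_reverse, List.mem_reverse] at hk'
      rcases path_rank_le H w hw with hb | hb
      · exact (hb k' hk').trans hr'
      · exact hb k' hk'
    have := rip_aux H rinj Hf w.reverse.length j i w.reverse hw.reverse le_rfl b k
      (by rw [support_reverse, List.mem_reverse]; exact hk)
    rw [Set.inter_comm]
    exact this

lemma parent_reachable {a0 : α}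
    (hpar : ∀ a, a ≠ a0 → T.Adj a (par a) ∧ r (par a) < r a) :
    ∀ a, T.Reachable a a0 := by
  have key : ∀ n a, r a ≤ n → T.Reachable a a0 := by
    intro n
    induction n with
    | zero =>
      intro a h
      by_cases h0 : a = a0
      · subst h0; exact SimpleGraph.Reachable.refl a
      · exact absurd ((hpar a h0).2.trans_le h) (by omega)
    | succ n ihn =>
      intro a h
      by_cases h0 : a = a0
      · subst h0; exact SimpleGraph.Reachable.refl a
      · obtain ⟨hadj, hlt⟩ := hpar a h0
        exact hadj.reachable.trans (ihn (par a) (by omega))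
  intro a
  exact key (r a) a le_rfl

end ParentGraph2

section S2T

lemma exists_junctionTree_of_perfectEnum [Fintype V] {G : SimpleGraph V}
    {c : Set V} {L : List (Set V)} (hPE : PerfectEnum G Set.univ c L) :
    ∃ T : SimpleGraph {s : Set V // MaxClique G s}, T.IsTree ∧
      ∀ (Qi Qj : {s : Set V // MaxClique G s}) (w : T.Walk Qi Qj), w.IsPath →
        ∀ Q ∈ w.support, Qi.val ∩ Qj.val ⊆ Q.val := by
  classical
  obtain ⟨⟨c0, L0, rfl, hc0⟩, hnd, hmem, hcompl, hrip⟩ := hPE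
  set L : List (Set V) := c0 :: L0 with hLdef
  have hmem' : ∀ s ∈ L, MaxClique G s := by
    intro s hs
    rw [← maxCliqueOn_univ]
    exact hmem s hs
  have hcompl' : ∀ s : Set V, MaxClique G s → s ∈ L := by
    intro s hs
    rw [← maxCliqueOn_univ] at hs
    exact hcompl s hs
  set α := {s : Set V // MaxClique G s} with hα
  have hmemL : ∀ a : α, a.val ∈ L := fun a => hcompl' a.val a.2
  set r : α → ℕ := fun a => L.idxOf a.val with hr
  have hrlt : ∀ a : α, r a < L.length := fun a => List.idxOf_lt_length_iff.mpr (hmemL a)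
  have hget : ∀ a : α, L[r a]'(hrlt a) = a.val := fun a => List.getElem_idxOf (hrlt a)
  have rinj : Function.Injective r := by
    intro a b hab
    have : L[r a]'(hrlt a) = L[r b]'(hrlt b) := by congr 1
    rw [hget a, hget b] at this
    exact Subtype.ext this
  -- index recovery : if L[j] = t then indexOf t = j
  have hidx : ∀ (j : ℕ) (hj : j < L.length), L.idxOf (L[j]'hj) = j := by
    intro j hj
    have h1 : L[j]'hj ∈ L := List.getElem_mem _
    have h2 : L.idxOf (L[j]'hj) < L.length := List.idxOf_lt_length_iff.mpr h1
    have h3 : L[L.idxOf (L[j]'hj)]'h2 = L[j]'hj := List.getElem_idxOf h2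
    exact (List.Nodup.getElem_inj_iff hnd).mp h3
  -- parent existence
  have hpar : ∀ a : α, 0 < r a → ∃ p : α, r p < r a ∧
      ∀ b : α, r b < r a → a.val ∩ b.val ⊆ p.val := by
    intro a hra
    have hsplit : L = L.take (r a) ++ (a.val :: L.drop (r a + 1)) := by
      conv_lhs => rw [← List.take_append_drop (r a) L]
      congr 1
      rw [List.drop_eq_getElem_cons (hrlt a), hget a]
    have htne : L.take (r a) ≠ [] := by
      intro h
      have := congrArg List.length h
      simp only [List.length_take, List.length_nil] at this
      have h2 := hrlt a
      omega
    obtain ⟨t, ht, hall⟩ := hrip (L.take (r a)) a.val (L.drop (r a + 1)) hsplit htne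
    have htL : t ∈ L := List.mem_of_mem_take ht
    refine ⟨⟨t, hmem' t htL⟩, ?_, ?_⟩
    · obtain ⟨jt, hjt, hjteq⟩ := List.mem_iff_getElem.mp ht
      have hjt2 : jt < L.length := lt_of_lt_of_le hjt (by simp [List.length_take])
      have : L[jt]'hjt2 = t := by rw [← hjteq, List.getElem_take]
      have hidxt : L.idxOf t = jt := by rw [← this]; exact hidx jt hjt2
      have : jt < r a := by
        have := hjt
        simp only [List.length_take] at this
        omega
      simpa [hr, hidxt] using this
    · intro b hb
      have hbmem : b.val ∈ L.take (r a) := by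
        have hbl : r b < (L.take (r a)).length := by
          simp only [List.length_take]
          exact lt_min hb (hrlt b)
        have : (L.take (r a))[r b]'hbl = b.val := by
          rw [List.getElem_take]
          exact hget b
        rw [← this]
        exact List.getElem_mem _
      exact hall b.val hbmem
  set par : α → α := fun a => if h : 0 < r a then Classical.choose (hpar a h) else a
    with hpardef
  have hparspec : ∀ a : α, ∀ h : 0 < r a, r (par a) < r a ∧
      ∀ b : α, r b < r a → a.val ∩ b.val ⊆ (par a).val := by
    intro a h
    have := Classical.choose_spec (hpar a h)
    rw [hpardef]
    simp only [dif_pos h]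
    exact this
  set T : SimpleGraph α := {
    Adj := fun a b => (par a = b ∧ r b < r a) ∨ (par b = a ∧ r a < r b)
    symm := by
      constructor
      intro a b h
      rcases h with ⟨h1, h2⟩ | ⟨h1, h2⟩
      · exact Or.inr ⟨h1, h2⟩
      · exact Or.inl ⟨h1, h2⟩
    loopless := by
      constructor
      intro a h
      rcases h with ⟨_, h⟩ | ⟨_, h⟩ <;> exact lt_irrefl _ h } with hT
  have H : ParentStruct T r par := fun a b h => h
  -- the root
  have hc0max : MaxClique G c0 := hmem' c0 (List.mem_cons_self)
  set ρ : α := ⟨c0, hc0max⟩ with hρ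
  have hrρ : r ρ = 0 := List.idxOf_cons_self
  have hne0 : ∀ a : α, a ≠ ρ → 0 < r a := by
    intro a ha
    rcases Nat.eq_zero_or_pos (r a) with h0 | h0
    · exfalso
      apply ha
      apply rinj
      rw [h0, hrρ]
    · exact h0
  have hpar0 : ∀ a : α, a ≠ ρ → T.Adj a (par a) ∧ r (par a) < r a := by
    intro a ha
    have h0 := hne0 a ha
    have hspec := (hparspec a h0).1
    exact ⟨Or.inl ⟨rfl, hspec⟩, hspec⟩
  have hreach := parent_reachable (T := T) hpar0
  refine ⟨T, SimpleGraph.IsTree.mk ?_ ?_, ?_⟩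
  · exact SimpleGraph.Connected.mk
      (fun a b => (hreach a).trans (hreach b).symm) (nonempty := ⟨ρ⟩)
  · apply SimpleGraph.isAcyclic_of_path_unique
    intro v w p q
    exact Subtype.ext (path_unique H p.1 q.1 p.2 q.2)
  · intro Qi Qj w hw Q hQ
    refine rip_path H rinj ?_ w hw Q hQ
    intro a b hab
    have h0 : 0 < r a := lt_of_le_of_lt (Nat.zero_le _) hab
    exact (hparspec a h0).2 b hab

end S2T

section T2S

open SimpleGraph.Walk

lemma junctionTree_to_enum [Fintype V] {G : SimpleGraph V}
    (T : SimpleGraph {s : Set V // MaxClique G s}) (hT : T.IsTree)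
    (hJ : ∀ (Qi Qj : {s : Set V // MaxClique G s}) (w : T.Walk Qi Qj), w.IsPath →
      ∀ Q ∈ w.support, Qi.val ∩ Qj.val ⊆ Q.val) :
    ∃ LL : List (Set V), (∀ s ∈ LL, MaxClique G s) ∧ (∀ s, MaxClique G s → s ∈ LL) ∧
      RIP LL := by
  classical
  obtain ⟨ρ⟩ := hT.isConnected.nonempty
  have hup := hT.existsUnique_path
  set P : ∀ a b : {s : Set V // MaxClique G s}, T.Walk a b := fun a b => (hup a b).choose with hPdef
  have hPpath : ∀ a b : {s : Set V // MaxClique G s}, (P a b).IsPath := fun a b => (hup a b).choose_spec.1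
  have hPuniq : ∀ (a b : {s : Set V // MaxClique G s}) (q : T.Walk a b), q.IsPath → q = P a b := by
    intro a b q hq
    exact ((hup a b).choose_spec.2 q hq)
  set r : {s : Set V // MaxClique G s} → ℕ := fun a => (P a ρ).length with hrdef
  have hPρρ : P ρ ρ = SimpleGraph.Walk.nil := (hPuniq ρ ρ SimpleGraph.Walk.nil IsPath.nil).symm
  have hrρ : r ρ = 0 := by
    show (P ρ ρ).length = 0
    rw [hPρρ]
    rfl
  have hr0 : ∀ a : {s : Set V // MaxClique G s}, r a = 0 → a = ρ := by
    intro a h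
    exact SimpleGraph.Walk.eq_of_length_eq_zero h
  have hstep : ∀ a : {s : Set V // MaxClique G s}, a ≠ ρ → ∃ (p : {s : Set V // MaxClique G s}), ∃ (h : T.Adj a p), ∃ (w' : T.Walk p ρ),
      P a ρ = SimpleGraph.Walk.cons h w' := by
    intro a ha
    cases hPa : P a ρ with
    | nil => exact absurd rfl ha
    | @cons _ x _ h w' => exact ⟨x, h, w', rfl⟩
  set par : {s : Set V // MaxClique G s} → {s : Set V // MaxClique G s} := fun a => if h : a = ρ then ρ else (hstep a h).choose with hpardef
  have hparspec : ∀ (a : {s : Set V // MaxClique G s}) (h : a ≠ ρ), ∃ (hadj : T.Adj a (par a)) (w' : T.Walk (par a) ρ),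
      P a ρ = SimpleGraph.Walk.cons hadj w' := by
    intro a h
    have hpa : par a = (hstep a h).choose := dif_neg h
    rw [hpa]
    exact (hstep a h).choose_spec
  have hrpar : ∀ (a : {s : Set V // MaxClique G s}) (h : a ≠ ρ), r (par a) + 1 = r a ∧ T.Adj a (par a) := by
    intro a h
    obtain ⟨hadj, w', hw⟩ := hparspec a h
    have hw'path : w'.IsPath := by
      have := hPpath a ρ
      rw [hw] at this
      exact this.of_cons
    have hcan : w' = P (par a) ρ := hPuniq _ _ w' hw'path
    constructor
    · show (P (par a) ρ).length + 1 = (P a ρ).length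
      rw [hw, SimpleGraph.Walk.length_cons, ← hcan]
    · exact hadj
  have hsecond : ∀ (a : {s : Set V // MaxClique G s}) (h : a ≠ ρ) {q : {s : Set V // MaxClique G s}} (hadj : T.Adj a q) (w2 : T.Walk q ρ),
      P a ρ = SimpleGraph.Walk.cons hadj w2 → q = par a := by
    intro a h q hadj w2 heq
    obtain ⟨hadj', w', hw⟩ := hparspec a h
    have h2 := congrArg (fun w : T.Walk a ρ => w.getVert 1) (heq.symm.trans hw)
    simpa [SimpleGraph.Walk.getVert_cons_succ, SimpleGraph.Walk.getVert_zero] using h2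
  have H : ParentStruct T r par := by
    intro a b hadj
    by_cases hb : b ∈ (P a ρ).support
    · left
      have ha : a ≠ ρ := by
        intro h
        subst h
        rw [hPρρ] at hb
        simp at hb
        subst hb
        exact T.loopless.irrefl _ hadj
      have hedgepath : (SimpleGraph.Walk.cons hadj SimpleGraph.Walk.nil).IsPath :=
        (SimpleGraph.Path.singleton hadj).2
      have htakepath : ((P a ρ).takeUntil b hb).IsPath := (hPpath a ρ).takeUntil hb
      have htake : (P a ρ).takeUntil b hb = SimpleGraph.Walk.cons hadj SimpleGraph.Walk.nil := by
        rw [hPuniq a b _ htakepath, hPuniq a b _ hedgepath]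
      have hPdecomp : P a ρ = SimpleGraph.Walk.cons hadj ((P a ρ).dropUntil b hb) := by
        conv_lhs => rw [← SimpleGraph.Walk.take_spec (P a ρ) hb]
        rw [htake]
        simp
      have hb_par : b = par a := hsecond a ha hadj _ hPdecomp
      refine ⟨hb_par.symm, ?_⟩
      rw [hb_par]
      have := (hrpar a ha).1
      omega
    · right
      have hbρ : b ≠ ρ := fun h => hb (h ▸ SimpleGraph.Walk.end_mem_support _)
      have hWpath : (SimpleGraph.Walk.cons hadj.symm (P a ρ)).IsPath :=
        (SimpleGraph.Walk.cons_isPath_iff _ _).mpr ⟨hPpath a ρ, hb⟩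
      have hWeq : P b ρ = SimpleGraph.Walk.cons hadj.symm (P a ρ) :=
        (hPuniq b ρ _ hWpath).symm
      have hpar : a = par b := hsecond b hbρ hadj.symm _ hWeq
      refine ⟨hpar.symm, ?_⟩
      have : r b = r a + 1 := by
        show (P b ρ).length = (P a ρ).length + 1
        rw [hWeq, SimpleGraph.Walk.length_cons]
      omega
  have hE : ∀ a b : {s : Set V // MaxClique G s}, b ≠ a → r b ≤ r a → 0 < r a → par a ∈ (P a b).support := by
    intro a b hba hr' hra
    have hbound : ∀ k ∈ (P a b).support, r k ≤ r a := by
      rcases path_rank_le H (P a b) (hPpath a b) with h | h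
      · exact h
      · exact fun k hk => (h k hk).trans hr'
    cases hPab : P a b with
    | nil => exact absurd rfl hba.symm
    | @cons _ x _ h2 w2 =>
      have hx : x ∈ (SimpleGraph.Walk.cons h2 w2).support := by
        rw [support_cons]
        exact List.mem_cons_of_mem _ (start_mem_support _)
      have hx' : x ∈ (P a b).support := by rw [hPab]; exact hx
      rcases H a x h2 with ⟨hh, _⟩ | ⟨_, hlt⟩
      · subst hh
        exact hx
      · exact absurd hlt (not_lt.mpr (hbound x hx'))
  haveI : Fintype {s : Set V // MaxClique G s} := Fintype.ofFinite _
  have hrlt : ∀ a : {s : Set V // MaxClique G s}, r a < (Fintype.card {s : Set V // MaxClique G s}) := fun a => (hPpath a ρ).length_lt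
  set F : ℕ → List {s : Set V // MaxClique G s} := fun k => (Finset.univ.filter (fun a : {s : Set V // MaxClique G s} => r a = k)).toList with hF
  set Lα : List {s : Set V // MaxClique G s} := (List.range ((Fintype.card {s : Set V // MaxClique G s}))).flatMap F with hLα
  have hrF : ∀ k, ∀ a ∈ F k, r a = k := by
    intro k a ha
    rw [hF] at ha
    simpa using (Finset.mem_toList.mp ha)
  have hmemLα : ∀ a : {s : Set V // MaxClique G s}, a ∈ Lα := by
    intro a
    refine List.mem_flatMap.mpr ⟨r a, List.mem_range.mpr (hrlt a), ?_⟩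
    rw [hF]
    simp [Finset.mem_toList]
  have hpw : List.Pairwise (fun x y : {s : Set V // MaxClique G s} => r x ≤ r y ∧ x ≠ y) Lα := by
    refine List.pairwise_flatMap.mpr ⟨?_, ?_⟩
    · intro k _
      refine List.Pairwise.imp_of_mem ?_ (Finset.nodup_toList _)
      intro x y hx hy hxy
      exact ⟨le_of_eq ((hrF k x hx).trans (hrF k y hy).symm), hxy⟩
    · refine List.Pairwise.imp_of_mem ?_ List.pairwise_lt_range
      intro k1 k2 h1 h2 hlt x hx y hy
      have hrx := hrF k1 x hx
      have hry := hrF k2 y hy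
      refine ⟨by omega, ?_⟩
      intro h
      rw [h] at hrx
      omega
  refine ⟨Lα.map Subtype.val, ?_, ?_, ?_⟩
  · intro s hs
    obtain ⟨a, _, rfl⟩ := List.mem_map.mp hs
    exact a.2
  · intro s hs
    exact List.mem_map_of_mem (hmemLα ⟨s, hs⟩)
  · intro l1 s l2 hsplit hne
    obtain ⟨m1, rest, hLsplit, hm1, hm2⟩ := List.map_eq_append_iff.mp hsplit
    obtain ⟨a, m2, hrest, hfa, hm3⟩ := List.map_eq_cons_iff.mp hm2
    subst hrest
    subst hfa
    have hpw2 := hpw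
    rw [hLsplit] at hpw2
    have hpwparts := List.pairwise_append.mp hpw2
    have HA : ∀ x ∈ m1, r x ≤ r a ∧ x ≠ a := by
      intro x hx
      exact hpwparts.2.2 x hx a (List.mem_cons_self)
    have hm1ne : m1 ≠ [] := by
      intro h
      apply hne
      rw [← hm1, h]
      rfl
    obtain ⟨b0, hb0⟩ := List.exists_mem_of_ne_nil m1 hm1ne
    have hra : 0 < r a := by
      rcases Nat.eq_zero_or_pos (r a) with h0 | h0
      · exfalso
        obtain ⟨hle, hneb⟩ := HA b0 hb0
        have hb00 : r b0 = 0 := by omega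
        exact hneb ((hr0 b0 hb00).trans (hr0 a h0).symm)
      · exact h0
    have haρ : a ≠ ρ := by
      intro h
      rw [h, hrρ] at hra
      omega
    have hparlt : r (par a) < r a := by
      have := (hrpar a haρ).1
      omega
    have hparmem : par a ∈ m1 := by
      have h1 : par a ∈ Lα := hmemLα _
      rw [hLsplit] at h1
      rcases List.mem_append.mp h1 with h1 | h1
      · exact h1
      · rcases List.mem_cons.mp h1 with h1 | h1
        · rw [h1] at hparlt
          omega
        · exfalso
          have := (List.pairwise_cons.mp hpwparts.2.1).1 (par a) h1
          omega
    refine ⟨(par a).val, by rw [← hm1]; exact List.mem_map_of_mem hparmem, ?_⟩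
    intro b hb
    rw [← hm1] at hb
    obtain ⟨xb, hxb, rfl⟩ := List.mem_map.mp hb
    obtain ⟨hle, hne'⟩ := HA xb hxb
    exact hJ a xb (P a xb) (hPpath a xb) (par a) (hE a xb hne' hle hra)

end T2S

section Backward

open SimpleGraph.Walk

lemma separates_of_no_adj {G : SimpleGraph V} {A B : Set V}
    (hno : ∀ x ∈ A \ B, ∀ y ∈ B \ A, ¬ G.Adj x y) : Separates G A B := by
  intro a ha b hb w hw
  have aux : ∀ (x z : V) (w' : G.Walk x z), z ∈ B \ A → x ∈ A →
      (∀ v ∈ w'.support, v ∈ A ∪ B) → ∃ v ∈ w'.support, v ∈ A ∩ B := by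
    intro x z w'
    induction w' with
    | nil =>
      intro hz hx _
      exact absurd hx hz.2
    | @cons x y _ hadj w'' ih =>
      intro hz hx hsup
      by_cases hxB : x ∈ B
      · exact ⟨x, start_mem_support _, hx, hxB⟩
      · have hyAB : y ∈ A ∪ B := hsup y (by
          rw [support_cons]; exact List.mem_cons_of_mem _ (start_mem_support _))
        have hyA : y ∈ A := by
          rcases hyAB with h | h
          · exact h
          · by_cases hyA : y ∈ A
            · exact hyA
            · exact absurd hadj (hno x ⟨hx, hxB⟩ y ⟨h, hyA⟩)
        obtain ⟨v, hv, hv2⟩ := ih hz hyA (fun v hvs => hsup v (by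
          rw [support_cons]; exact List.mem_cons_of_mem _ hvs))
        exact ⟨v, by rw [support_cons]; exact List.mem_cons_of_mem _ hv, hv2⟩
  exact aux a b w hb ha.1 hw

lemma decomposableOn_of_enum [Fintype V] {G : SimpleGraph V} (LL : List (Set V))
    (hclq : ∀ s ∈ LL, G.IsClique s)
    (hcompl : ∀ s, MaxClique G s → s ∈ LL)
    (hrip : RIP LL) : DecomposableOn G Set.univ := by
  classical
  set S : ℕ → Set V := fun k => {v | ∃ (i : ℕ) (h : i < LL.length), i < k ∧ v ∈ LL[i]'h}
    with hS
  have hpair : ∀ x y : V, G.Adj x y → ∃ (m : ℕ) (hm : m < LL.length),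
      x ∈ LL[m]'hm ∧ y ∈ LL[m]'hm := by
    intro x y hadj
    have hcl : G.IsClique {x, y} := SimpleGraph.isClique_pair.mpr (fun _ => hadj)
    obtain ⟨Q, hQ, hsub⟩ := exists_maxCliqueOn G hcl (Set.subset_univ _)
    rw [maxCliqueOn_univ] at hQ
    obtain ⟨m, hm, hmeq⟩ := List.mem_iff_getElem.mp (hcompl Q hQ)
    exact ⟨m, hm, hmeq ▸ hsub (by simp), hmeq ▸ hsub (by simp)⟩
  have hripidx : ∀ (m : ℕ) (hm : m < LL.length), 0 < m → ∃ j, ∃ _ : j < m, ∃ hj : j < LL.length,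
      ∀ i, i < m → ∀ hi : i < LL.length, (LL[m]'hm) ∩ (LL[i]'hi) ⊆ LL[j]'hj := by
    intro m hm h0
    have hsplit : LL = LL.take m ++ (LL[m]'hm) :: LL.drop (m+1) := by
      conv_lhs => rw [← List.take_append_drop m LL]
      congr 1
      rw [List.drop_eq_getElem_cons hm]
    have htne : LL.take m ≠ [] := by
      intro h
      have := congrArg List.length h
      simp only [List.length_take, List.length_nil] at this
      omega
    obtain ⟨t, ht, hall⟩ := hrip _ _ _ hsplit htne
    obtain ⟨j, hjlen, hjeq⟩ := List.mem_iff_getElem.mp ht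
    have hjm : j < m := by
      have := hjlen
      simp only [List.length_take] at this
      omega
    have hjL : j < LL.length := by omega
    have htj : t = LL[j]'hjL := by rw [← hjeq, List.getElem_take]
    refine ⟨j, hjm, hjL, ?_⟩
    intro i him hiL
    have hitake : (LL[i]'hiL) ∈ LL.take m := by
      have hl : i < (LL.take m).length := by
        simp only [List.length_take]
        omega
      have : (LL.take m)[i]'hl = LL[i]'hiL := List.getElem_take
      rw [← this]
      exact List.getElem_mem _
    have := hall _ hitake
    rw [htj] at this
    exact this
  have hnoedge : ∀ (k : ℕ) (hk : k < LL.length),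
      ∀ x ∈ S k \ (LL[k]'hk), ∀ y ∈ (LL[k]'hk) \ S k, ¬ G.Adj x y := by
    intro k hk x hx y hy hadj
    obtain ⟨m, hm, hxm, hym⟩ := hpair x y hadj
    have haux : ∀ m, ∀ hm : m < LL.length, ¬(x ∈ LL[m]'hm ∧ y ∈ LL[m]'hm) := by
      intro m
      induction m using Nat.strong_induction_on with
      | _ m ih =>
        rintro hm ⟨hxm, hym⟩
        rcases lt_trichotomy m k with hlt | heq | hgt
        · exact hy.2 ⟨m, hm, hlt, hym⟩
        · subst heq
          exact hx.2 hxm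
        · obtain ⟨j, hjm, hjL, hj⟩ := hripidx m hm (by omega)
          obtain ⟨i, hiL, hik, hxi⟩ := hx.1
          have h1 : x ∈ LL[j]'hjL := hj i (by omega) hiL ⟨hxm, hxi⟩
          have h2 : y ∈ LL[j]'hjL := hj k (by omega) hk ⟨hym, hy.1⟩
          exact ih j hjm hjL ⟨h1, h2⟩
    exact haux m hm ⟨hxm, hym⟩
  have hS0 : S 0 = ∅ := by
    ext v
    simp [hS]
  have hmain : ∀ k, DecomposableOn G (S k) := by
    intro k
    induction k with
    | zero =>
      rw [hS0]
      exact DecomposableOn.complete ∅ (fun a ha => absurd ha (Set.notMem_empty a))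
    | succ k ih =>
      by_cases hk : k < LL.length
      · have hSk : S (k+1) = S k ∪ (LL[k]'hk) := by
          ext v
          simp only [hS, Set.mem_setOf_eq, Set.mem_union]
          constructor
          · rintro ⟨i, hi, hik, hv⟩
            rcases Nat.lt_or_ge i k with h | h
            · exact Or.inl ⟨i, hi, h, hv⟩
            · have : i = k := by omega
              subst this
              exact Or.inr hv
          · rintro (⟨i, hi, hik, hv⟩ | hv)
            · exact ⟨i, hi, by omega, hv⟩
            · exact ⟨k, hk, by omega, hv⟩
        rw [hSk]
        have hBc : IsCompleteOn G (LL[k]'hk) :=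
          isCompleteOn_iff_isClique.mpr (hclq _ (List.getElem_mem _))
        by_cases hk0 : k = 0
        · subst hk0
          have h1 : S 0 ∪ (LL[0]'hk) = LL[0]'hk := by
            rw [hS0]
            simp
          rw [h1]
          exact DecomposableOn.complete _ hBc
        · obtain ⟨j, hjk, hjL, hj⟩ := hripidx k hk (by omega)
          have hABsub : S k ∩ (LL[k]'hk) ⊆ LL[j]'hjL := by
            rintro v ⟨⟨i, hi, hik, hvi⟩, hvk⟩
            exact hj i hik hi ⟨hvk, hvi⟩
          have hABc : IsCompleteOn G (S k ∩ (LL[k]'hk)) := by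
            intro x hx y hy hxy
            exact (hclq _ (List.getElem_mem hjL)) (hABsub hx) (hABsub hy) hxy
          exact DecomposableOn.decomp _ _ hABc (separates_of_no_adj (hnoedge k hk)) ih
            (DecomposableOn.complete _ hBc)
      · have h1 : S (k+1) = S k := by
          ext v
          simp only [hS, Set.mem_setOf_eq]
          constructor
          · rintro ⟨i, hi, _, hv⟩
            exact ⟨i, hi, by omega, hv⟩
          · rintro ⟨i, hi, hik, hv⟩
            exact ⟨i, hi, by omega, hv⟩
        rw [h1]
        exact ih
  have huniv : S LL.length = Set.univ := by
    ext v
    simp only [hS, Set.mem_setOf_eq, Set.mem_univ, iff_true]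
    obtain ⟨Q, hQ, hsub⟩ := exists_maxCliqueOn G (SimpleGraph.isClique_singleton v)
      (Set.subset_univ _)
    rw [maxCliqueOn_univ] at hQ
    obtain ⟨m, hm, hmeq⟩ := List.mem_iff_getElem.mp (hcompl Q hQ)
    exact ⟨m, hm, hm, hmeq ▸ hsub rfl⟩
  rw [← huniv]
  exact hmain LL.length

end Backward


/-- **A finite undirected graph `G` is decomposable if and only if its maximal cliques
can be arranged in a junction tree**: a tree `T` whose vertices are the maximal cliques
of `G` such that for any two cliques `Qi`, `Qj`, the intersection `Qi ∩ Qj` is contained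
in every clique on the (unique) path in `T` between `Qi` and `Qj`. -/
theorem decomposable_iff_junctionTree [Fintype V] (G : SimpleGraph V) :
    Decomposable G ↔
      ∃ T : SimpleGraph {s : Set V // MaxClique G s}, T.IsTree ∧
        ∀ (Qi Qj : {s : Set V // MaxClique G s}) (w : T.Walk Qi Qj), w.IsPath →
          ∀ Q ∈ w.support, Qi.val ∩ Qj.val ⊆ Q.val := by
  constructor
  · intro h
    obtain ⟨L, hL⟩ := DecomposableOn.perfectEnum h ∅ SimpleGraph.isClique_empty
      (Set.empty_subset _)
    exact exists_junctionTree_of_perfectEnum hL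
  · rintro ⟨T, hT, hJ⟩
    obtain ⟨LL, hmem, hcompl, hrip⟩ := junctionTree_to_enum T hT hJ
    exact decomposableOn_of_enum LL (fun s hs => (hmem s hs).1) hcompl hrip
end
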